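/- arXiv:1803.08081 — 7 statements merged into one kernel-verified Lean document; each statement's English description precedes it below -/
import Mathlib

section
/- Almost surely, the set of original ancestors {m ∈ ℤ : N_m = 1} = {m ∈ ℤ : a_{m-i} ≤ i for all i ≥ 1} is infinite; in fact it is almost surely unbounded above and unbounded below in ℤ. -/
open MeasureTheory ProbabilityTheory Filter
open scoped ENNReal

section AuxAll

variable {Ω : Type*} [MeasurableSpace Ω] {P : Measure Ω}

lemma iIndep_precomp {ι κ' : Type*} {m : ι → MeasurableSpace Ω} {g : κ' → ι}
    (hg : Function.Injective g) (h : iIndep m P) : iIndep (fun n => m (g n)) P := by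
  rw [iIndep_iff] at h ⊢
  intro s f hf
  classical
  set f' : ι → Set Ω := fun j => if hj : ∃ n ∈ s, g n = j then f hj.choose else Set.univ with hf'
  have hgf : ∀ n ∈ s, f' (g n) = f n := by
    intro n hn
    have hj : ∃ n' ∈ s, g n' = g n := ⟨n, hn, rfl⟩
    simp only [hf', dif_pos hj]
    exact congrArg f (hg hj.choose_spec.2)
  have hmeas' : ∀ j ∈ s.image g, MeasurableSet[m j] (f' j) := by
    intro j hj
    simp only [Finset.mem_image] at hj
    obtain ⟨n, hn, rfl⟩ := hj
    rw [hgf n hn]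
    exact hf n hn
  have := h (s.image g) hmeas'
  rw [Finset.set_biInter_finset_image, Finset.prod_image (fun x hx y hy hxy => hg hxy)] at this
  calc P (⋂ n ∈ s, f n) = P (⋂ n ∈ s, f' (g n)) := by
        congr 1; exact (Set.iInter₂_congr hgf).symm
    _ = ∏ n ∈ s, P (f' (g n)) := this
    _ = ∏ n ∈ s, P (f n) := Finset.prod_congr rfl fun n hn => by rw [hgf n hn]


variable {a : ℤ → Ω → ℕ}

lemma map_eq_aux (hmeas : ∀ n, Measurable (a n))
    (hident : ∀ n, Measure.map (a n) P = Measure.map (a 0) P) (n : ℤ) (S : Set ℕ) :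
    P (a n ⁻¹' S) = P (a 0 ⁻¹' S) := by
  have hS : MeasurableSet S := .of_discrete
  rw [← Measure.map_apply (hmeas n) hS, ← Measure.map_apply (hmeas 0) hS, hident n]

lemma prod_formula [IsProbabilityMeasure P]
    (hindep : iIndepFun a P)
    (hmeas : ∀ n, Measurable (a n))
    (hident : ∀ n, Measure.map (a n) P = Measure.map (a 0) P)
    (m : ℤ) (s : Finset ℕ) :
    P (⋂ i ∈ s, {ω | a (m - (i : ℤ)) ω ≤ i}) = ∏ i ∈ s, P {ω | a 0 ω ≤ i} := by
  classical
  have hg : Function.Injective (fun i : ℕ => m - (i : ℤ)) := fun i j h => by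
    simp only [sub_right_inj, Int.natCast_inj] at h; omega
  have key := hindep.meas_biInter (S := s.image (fun i : ℕ => m - (i : ℤ)))
    (s := fun j => {ω | a j ω ≤ (m - j).toNat}) ?_
  · rw [Finset.set_biInter_finset_image,
      Finset.prod_image (fun x hx y hy hxy => hg hxy)] at key
    simp only [sub_sub_cancel, Int.toNat_natCast] at key
    rw [key]
    exact Finset.prod_congr rfl fun i _ => map_eq_aux hmeas hident _ (Set.Iic i)
  · intro j hj
    exact ⟨Set.Iic ((m - j).toNat), .of_discrete, rfl⟩

lemma tail_sum (hmeas : ∀ n, Measurable (a n))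
    (hmean : ∫⁻ ω, (a 0 ω : ℝ≥0∞) ∂P < ⊤) :
    ∑' i : ℕ, P {ω | i < a 0 ω} ≠ ∞ := by
  have key : ∀ N : ℕ, ∑ i ∈ Finset.range N, P {ω | i < a 0 ω} ≤ ∫⁻ ω, (a 0 ω : ℝ≥0∞) ∂P := by
    intro N
    have hms : ∀ i : ℕ, MeasurableSet {ω | i < a 0 ω} := fun i =>
      (hmeas 0) (MeasurableSet.of_discrete (s := {j | i < j}))
    have h1 : ∀ i : ℕ, P {ω | i < a 0 ω}
        = ∫⁻ ω, Set.indicator {ω | i < a 0 ω} (fun _ => (1:ℝ≥0∞)) ω ∂P := fun i =>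
      (lintegral_indicator_one (hms i)).symm
    calc ∑ i ∈ Finset.range N, P {ω | i < a 0 ω}
        = ∑ i ∈ Finset.range N, ∫⁻ ω, Set.indicator {ω | i < a 0 ω} (fun _ => (1:ℝ≥0∞)) ω ∂P := by
          simp_rw [h1]
      _ = ∫⁻ ω, ∑ i ∈ Finset.range N, Set.indicator {ω | i < a 0 ω} (fun _ => (1:ℝ≥0∞)) ω ∂P := by
          rw [lintegral_finset_sum]
          exact fun i _ => (measurable_const.indicator (hms i))
      _ ≤ ∫⁻ ω, (a 0 ω : ℝ≥0∞) ∂P := by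
          refine lintegral_mono fun ω => ?_
          classical
          have : ∑ i ∈ Finset.range N, Set.indicator {ω | i < a 0 ω} (fun _ => (1:ℝ≥0∞)) ω
              = ∑ i ∈ Finset.range N, if i < a 0 ω then (1:ℝ≥0∞) else 0 := by
            refine Finset.sum_congr rfl fun i _ => ?_
            by_cases h : i < a 0 ω <;> simp [Set.indicator, h]
          rw [this, Finset.sum_boole]
          have hsub : (Finset.range N).filter (fun i => i < a 0 ω) ⊆ Finset.range (a 0 ω) := by
            intro i hi
            simp only [Finset.mem_filter, Finset.mem_range] at hi ⊢
            exact hi.2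
          have := Finset.card_le_card hsub
          simp only [Finset.card_range] at this
          exact_mod_cast Nat.cast_le.2 this
  refine ne_of_lt (lt_of_le_of_lt ?_ hmean)
  rw [ENNReal.tsum_eq_iSup_sum]
  refine iSup_le fun s => ?_
  obtain ⟨N, hN⟩ := s.exists_nat_subset_range
  exact le_trans (Finset.sum_le_sum_of_subset hN) (key N)

def AA (a : ℤ → Ω → ℕ) (m : ℤ) : Set Ω := ⋂ (i : ℕ) (_ : 1 ≤ i), {ω | a (m - (i:ℤ)) ω ≤ i}

lemma mem_AA {m : ℤ} {ω : Ω} : ω ∈ AA a m ↔ ∀ i : ℕ, 1 ≤ i → a (m - (i:ℤ)) ω ≤ i := by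
  simp [AA]

lemma measurableSet_AA (hmeas : ∀ n, Measurable (a n)) (m : ℤ) : MeasurableSet (AA a m) := by
  refine MeasurableSet.iInter fun i => MeasurableSet.iInter fun _ => ?_
  exact (hmeas _) (MeasurableSet.of_discrete (s := Set.Iic i))

lemma exists_delta [IsProbabilityMeasure P]
    (hindep : iIndepFun a P)
    (hmeas : ∀ n, Measurable (a n))
    (hident : ∀ n, Measure.map (a n) P = Measure.map (a 0) P)
    (htsum : ∑' i : ℕ, P {ω | i < a 0 ω} ≠ ∞)
    (h1 : 0 < P {ω | a 0 ω = 1}) :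
    ∃ δ : ℝ≥0∞, 0 < δ ∧ ∀ m : ℤ, δ ≤ P (AA a m) := by
  classical
  set f : ℕ → ℝ≥0∞ := fun i => P {ω | i < a 0 ω} with hf
  obtain ⟨I, hI⟩ : ∃ I : ℕ, ∑' k : ℕ, f (k + I) ≤ 1/2 := by
    have htend := ENNReal.tendsto_sum_nat_add f htsum
    have : ∀ᶠ I in atTop, ∑' k : ℕ, f (k + I) ≤ 1/2 :=
      htend.eventually (eventually_le_nhds (by norm_num))
    exact this.exists
  have hple : ∀ i : ℕ, 1 ≤ i → 0 < P {ω | a 0 ω ≤ i} := by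
    intro i hi
    refine lt_of_lt_of_le h1 (measure_mono fun ω hω => ?_)
    simp only [Set.mem_setOf_eq] at hω ⊢
    omega
  have hδpos : 0 < (∏ i ∈ Finset.Icc 1 I, P {ω | a 0 ω ≤ i}) * (1/2) := by
    refine ENNReal.mul_pos ?_ (by norm_num)
    refine Finset.prod_ne_zero_iff.2 ?_
    intro i hi
    simp only [Finset.mem_Icc] at hi
    exact (hple i hi.1).ne'
  refine ⟨_, hδpos, fun m => ?_⟩
  have hAA : AA a m = ⋂ N : ℕ, ⋂ i ∈ Finset.Icc 1 N, {ω | a (m - (i:ℤ)) ω ≤ i} := by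
    ext ω
    simp only [AA, Set.mem_iInter, Set.mem_setOf_eq, Finset.mem_Icc]
    constructor
    · intro h N i hi; exact h i hi.1
    · intro h i hi; exact h i i ⟨hi, le_rfl⟩
  have hanti : Antitone (fun N : ℕ => ⋂ i ∈ Finset.Icc 1 N, {ω | a (m - (i:ℤ)) ω ≤ i}) := by
    intro N N' hNN' ω hω
    simp only [Set.mem_iInter, Finset.mem_Icc] at hω ⊢
    intro i hi; exact hω i ⟨hi.1, le_trans hi.2 hNN'⟩
  have hmeasC : ∀ N : ℕ, MeasurableSet (⋂ i ∈ Finset.Icc 1 N, {ω | a (m - (i:ℤ)) ω ≤ i}) := by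
    intro N
    refine Finset.measurableSet_biInter _ fun i _ => ?_
    exact (hmeas _) (MeasurableSet.of_discrete (s := Set.Iic i))
  rw [hAA, Antitone.measure_iInter hanti (fun N => (hmeasC N).nullMeasurableSet)
    ⟨0, measure_ne_top _ _⟩]
  refine le_iInf fun N => ?_
  rw [prod_formula hindep hmeas hident m (Finset.Icc 1 N)]
  rcases le_or_gt N I with hNI | hIN
  · have hsplit : Finset.Icc 1 I = Finset.Icc 1 N ∪ Finset.Ioc N I := by
      ext x; simp only [Finset.mem_union, Finset.mem_Icc, Finset.mem_Ioc]; omega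
    have hdisj : Disjoint (Finset.Icc 1 N) (Finset.Ioc N I) := by
      simp only [Finset.disjoint_left, Finset.mem_Icc, Finset.mem_Ioc]
      omega
    calc (∏ i ∈ Finset.Icc 1 I, P {ω | a 0 ω ≤ i}) * (1/2)
        ≤ ∏ i ∈ Finset.Icc 1 I, P {ω | a 0 ω ≤ i} := mul_le_of_le_one_right' (by norm_num)
      _ = (∏ i ∈ Finset.Icc 1 N, P {ω | a 0 ω ≤ i}) * ∏ i ∈ Finset.Ioc N I, P {ω | a 0 ω ≤ i} := by
          rw [hsplit, Finset.prod_union hdisj]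
      _ ≤ ∏ i ∈ Finset.Icc 1 N, P {ω | a 0 ω ≤ i} :=
          mul_le_of_le_one_right' (Finset.prod_le_one' fun i _ => prob_le_one)
  · have hsplit : Finset.Icc 1 N = Finset.Icc 1 I ∪ Finset.Ioc I N := by
      ext x; simp only [Finset.mem_union, Finset.mem_Icc, Finset.mem_Ioc]; omega
    have hdisj : Disjoint (Finset.Icc 1 I) (Finset.Ioc I N) := by
      simp only [Finset.disjoint_left, Finset.mem_Icc, Finset.mem_Ioc]
      omega
    rw [hsplit, Finset.prod_union hdisj]
    refine mul_le_mul' le_rfl ?_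
    -- second factor ≥ 1/2
    rw [← prod_formula hindep hmeas hident m (Finset.Ioc I N)]
    set C : Set Ω := ⋂ i ∈ Finset.Ioc I N, {ω | a (m - (i:ℤ)) ω ≤ i} with hC
    have hmeasC2 : MeasurableSet C := by
      refine Finset.measurableSet_biInter _ fun i _ => ?_
      exact (hmeas _) (MeasurableSet.of_discrete (s := Set.Iic i))
    have hcompl : P Cᶜ ≤ 1/2 := by
      have hCc : Cᶜ = ⋃ i ∈ Finset.Ioc I N, {ω | a (m - (i:ℤ)) ω ≤ i}ᶜ := by
        rw [hC, Set.compl_iInter₂]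
      rw [hCc]
      refine le_trans (measure_biUnion_finset_le _ _) ?_
      have heach : ∀ i ∈ Finset.Ioc I N, P {ω | a (m - (i:ℤ)) ω ≤ i}ᶜ = f i := by
        intro i _
        have h1 : {ω | a (m - (i:ℤ)) ω ≤ i}ᶜ = a (m - (i:ℤ)) ⁻¹' {j | i < j} := by
          ext ω; simp only [Set.mem_compl_iff, Set.mem_setOf_eq, Set.mem_preimage, not_le]
        have h2 : {ω | (i:ℕ) < a 0 ω} = a 0 ⁻¹' {j | i < j} := rfl
        rw [h1, hf]
        simp only [h2]
        exact map_eq_aux hmeas hident _ _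
      rw [Finset.sum_congr rfl heach]
      have : Finset.Ioc I N = Finset.Ico (I+1) (N+1) := by
        ext x; simp [Finset.mem_Ioc, Finset.mem_Ico]
      rw [this, Finset.sum_Ico_eq_sum_range]
      refine le_trans ?_ hI
      calc ∑ k ∈ Finset.range (N + 1 - (I + 1)), f (I + 1 + k)
          = ∑ k ∈ Finset.range (N + 1 - (I + 1)), (fun k' => f (k' + I)) (k + 1) := by
            refine Finset.sum_congr rfl fun k _ => ?_
            show f _ = f _
            congr 1; omega
        _ ≤ ∑' k, (fun k' => f (k' + I)) (k + 1) := ENNReal.sum_le_tsum _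
        _ ≤ ∑' k', f (k' + I) :=
            ENNReal.tsum_comp_le_tsum_of_injective (add_left_injective 1) _
    have : P C = 1 - P Cᶜ := by
      simpa using prob_compl_eq_one_sub (μ := P) hmeasC2.compl
    rw [this]
    calc (1:ℝ≥0∞)/2 = 1 - 1/2 := by
          rw [one_div, ENNReal.one_sub_inv_two]
      _ ≤ 1 - P Cᶜ := tsub_le_tsub_left hcompl 1
  
lemma delta_le_iInter_iUnion [IsProbabilityMeasure P]
    (hmeas : ∀ n, Measurable (a n)) {δ : ℝ≥0∞}
    (hδ : ∀ m : ℤ, δ ≤ P (AA a m)) (g : ℕ → ℤ) :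
    δ ≤ P (⋂ k : ℕ, ⋃ j : ℕ, ⋃ (_ : k ≤ j), AA a (g j)) := by
  have hanti : Antitone (fun k : ℕ => ⋃ j : ℕ, ⋃ (_ : k ≤ j), AA a (g j)) := by
    intro k k' hkk' ω hω
    simp only [Set.mem_iUnion] at hω ⊢
    obtain ⟨j, hj, h2⟩ := hω
    exact ⟨j, le_trans hkk' hj, h2⟩
  rw [Antitone.measure_iInter hanti (fun k => (MeasurableSet.iUnion fun j =>
    MeasurableSet.iUnion fun _ => measurableSet_AA hmeas (g j)).nullMeasurableSet)
    ⟨0, measure_ne_top _ _⟩]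
  refine le_iInf fun k => le_trans (hδ (g k)) (measure_mono ?_)
  intro ω hω
  exact Set.mem_iUnion.2 ⟨k, Set.mem_iUnion.2 ⟨le_rfl, hω⟩⟩

/-- The sub-σ-algebra generated by coordinate `g n`. -/
noncomputable def sAlg (a : ℤ → Ω → ℕ) (g : ℕ → ℤ) (n : ℕ) : MeasurableSpace Ω :=
  MeasurableSpace.comap (a (g n)) inferInstance

lemma measurableSet_le_sAlg (g : ℕ → ℤ) (n : ℕ) (i : ℕ) :
    MeasurableSet[sAlg a g n] {ω | a (g n) ω ≤ i} :=
  ⟨Set.Iic i, .of_discrete, rfl⟩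

lemma sAlg_le_iSup (g : ℕ → ℤ) (N n : ℕ) (h : N ≤ n) :
    sAlg a g n ≤ ⨆ (i : ℕ) (_ : N ≤ i), sAlg a g i := by
  refine le_trans ?_ (le_iSup _ n)
  exact le_iSup (fun _ : N ≤ n => sAlg a g n) h

lemma iIndep_sAlg (hindep : iIndepFun a P)
    {g : ℕ → ℤ} (hg : Function.Injective g) :
    iIndep (sAlg a g) P :=
  iIndep_precomp (m := fun i : ℤ => MeasurableSpace.comap (a i) inferInstance) (g := g)
    hg hindep.iIndep

lemma zero_or_one_of_tail (hindep : iIndepFun a P)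
    (hmeas : ∀ n, Measurable (a n)) {g : ℕ → ℤ} (hg : Function.Injective g)
    {t : Set Ω} (ht : ∀ N : ℕ, MeasurableSet[⨆ (i : ℕ) (_ : N ≤ i), sAlg a g i] t) :
    P t = 0 ∨ P t = 1 := by
  refine measure_zero_or_one_of_measurableSet_limsup_atTop
    (fun n => (hmeas (g n)).comap_le) (iIndep_sAlg hindep hg) ?_
  rw [limsup_eq_iInf_iSup_of_nat]
  exact MeasurableSpace.measurableSet_iInf.2 ht

lemma meas_AA_sup (g : ℕ → ℤ) (N : ℕ) (m : ℤ)
    (hcoord : ∀ i : ℕ, 1 ≤ i → ∃ n : ℕ, N ≤ n ∧ g n = m - (i:ℤ)) :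
    MeasurableSet[⨆ (i : ℕ) (_ : N ≤ i), sAlg a g i] (AA a m) := by
  refine MeasurableSet.iInter fun i => MeasurableSet.iInter fun hi => ?_
  obtain ⟨n, hn, hgn⟩ := hcoord i hi
  have he : {ω : Ω | a (m - (i:ℤ)) ω ≤ i} = {ω | a (g n) ω ≤ i} := by rw [hgn]
  rw [he]
  exact sAlg_le_iSup g N n hn _ (measurableSet_le_sAlg g n i)

/-- Tail measurability of the "unbounded below" event. -/
lemma meas_Lset (N : ℕ) :
    MeasurableSet[⨆ (i : ℕ) (_ : N ≤ i), sAlg a (fun n : ℕ => (-1 - n : ℤ)) i]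
      (⋂ k : ℕ, ⋃ j : ℕ, ⋃ (_ : k ≤ j), AA a (-1 - (j:ℤ))) := by
  have hrw : (⋂ k : ℕ, ⋃ j : ℕ, ⋃ (_ : k ≤ j), AA a (-1 - (j:ℤ)))
      = ⋂ k : ℕ, ⋃ j : ℕ, ⋃ (_ : N + k ≤ j), AA a (-1 - (j:ℤ)) := by
    apply Set.Subset.antisymm
    · refine Set.subset_iInter fun k => ?_
      exact Set.iInter_subset _ (N + k)
    · refine Set.subset_iInter fun k => ?_
      refine le_trans (Set.iInter_subset _ k) ?_
      refine Set.iUnion₂_mono' fun j hj => ⟨j, le_trans (Nat.le_add_left k N) hj, le_rfl⟩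
  rw [hrw]
  refine MeasurableSet.iInter fun k => MeasurableSet.iUnion fun j =>
    MeasurableSet.iUnion fun hj => ?_
  refine meas_AA_sup _ N _ fun i hi => ⟨j + i, by omega, ?_⟩
  push_cast
  ring

def Bset (a : ℤ → Ω → ℕ) (K : ℕ) (m : ℤ) : Set Ω :=
  ⋂ (i : ℕ) (_ : 1 ≤ i) (_ : (K:ℤ) ≤ m - (i:ℤ)), {ω | a (m - (i:ℤ)) ω ≤ i}

def Vset (a : ℤ → Ω → ℕ) (K : ℕ) : Set Ω :=
  ⋂ r : ℕ, ⋃ u : ℕ, Bset a K ((r:ℤ) + 1 + (u:ℤ))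

lemma AA_subset_Bset (K : ℕ) (m : ℤ) : AA a m ⊆ Bset a K m := by
  intro ω hω
  simp only [AA, Set.mem_iInter, Set.mem_setOf_eq] at hω
  simp only [Bset, Set.mem_iInter, Set.mem_setOf_eq]
  exact fun i hi _ => hω i hi

lemma Bset_mono {K K' : ℕ} (h : K ≤ K') (m : ℤ) : Bset a K m ⊆ Bset a K' m := by
  intro ω hω
  simp only [Bset, Set.mem_iInter, Set.mem_setOf_eq] at hω ⊢
  intro i hi hKi
  exact hω i hi (le_trans (by exact_mod_cast Int.ofNat_le.2 h) hKi)

lemma Vset_mono : Monotone (Vset a) := by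
  intro K K' h ω hω
  simp only [Vset, Set.mem_iInter, Set.mem_iUnion] at hω ⊢
  intro r
  obtain ⟨u, hu⟩ := hω r
  exact ⟨u, Bset_mono h _ hu⟩

lemma meas_Bset_sup {N K : ℕ} (hNK : N ≤ K) (m : ℤ) :
    MeasurableSet[⨆ (i : ℕ) (_ : N ≤ i), sAlg a (fun n : ℕ => (n : ℤ)) i] (Bset a K m) := by
  refine MeasurableSet.iInter fun i => MeasurableSet.iInter fun hi =>
    MeasurableSet.iInter fun hKi => ?_
  set n : ℕ := (m - (i:ℤ)).toNat with hn
  have hn' : ((n:ℕ):ℤ) = m - (i:ℤ) := Int.toNat_of_nonneg (by omega)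
  have hNn : N ≤ n := by omega
  have he : {ω : Ω | a (m - (i:ℤ)) ω ≤ i} = {ω | a ((n:ℕ):ℤ) ω ≤ i} := by rw [hn']
  rw [he]
  exact sAlg_le_iSup _ N n hNn _ (measurableSet_le_sAlg (fun n : ℕ => (n:ℤ)) n i)

lemma meas_tset (N : ℕ) :
    MeasurableSet[⨆ (i : ℕ) (_ : N ≤ i), sAlg a (fun n : ℕ => (n : ℤ)) i]
      (⋃ K : ℕ, Vset a K) := by
  have hrw : (⋃ K : ℕ, Vset a K) = ⋃ K : ℕ, Vset a (N + K) := by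
    apply Set.Subset.antisymm
    · refine Set.iUnion_subset fun K => ?_
      refine le_trans (Vset_mono (Nat.le_add_left K N)) ?_
      exact Set.subset_iUnion (fun K => Vset a (N + K)) K
    · exact Set.iUnion_subset fun K => Set.subset_iUnion _ (N + K)
  rw [hrw]
  refine MeasurableSet.iUnion fun K => MeasurableSet.iInter fun r =>
    MeasurableSet.iUnion fun u => meas_Bset_sup (Nat.le_add_right N K) _

/-- Borel–Cantelli: eventually `a (K - 1 - j) ≤ j + 1`. -/
lemma bc_limsup [IsProbabilityMeasure P] (hmeas : ∀ n, Measurable (a n))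
    (hident : ∀ n, Measure.map (a n) P = Measure.map (a 0) P)
    (htsum : ∑' i : ℕ, P {ω | i < a 0 ω} ≠ ∞) (K : ℕ) :
    P (limsup (fun j : ℕ => {ω | (j:ℕ) + 1 < a ((K:ℤ) - 1 - (j:ℤ)) ω}) atTop) = 0 := by
  refine measure_limsup_atTop_eq_zero ?_
  have heach : ∀ j : ℕ, P {ω | (j:ℕ) + 1 < a ((K:ℤ) - 1 - (j:ℤ)) ω}
      = (fun i : ℕ => P {ω | i < a 0 ω}) (j + 1) := by
    intro j
    exact map_eq_aux hmeas hident _ {x | j + 1 < x}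
  refine ne_top_of_le_ne_top htsum ?_
  calc ∑' j : ℕ, P {ω | (j:ℕ) + 1 < a ((K:ℤ) - 1 - (j:ℤ)) ω}
      = ∑' j : ℕ, (fun i : ℕ => P {ω | i < a 0 ω}) (j + 1) := by
        exact tsum_congr heach
    _ ≤ ∑' i : ℕ, P {ω | i < a 0 ω} :=
        ENNReal.tsum_comp_le_tsum_of_injective (add_left_injective 1) _

lemma bound_of_not_limsup {K : ℕ} {ω : Ω}
    (hω : ω ∉ limsup (fun j : ℕ => {ω | (j:ℕ) + 1 < a ((K:ℤ) - 1 - (j:ℤ)) ω}) atTop) :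
    ∃ S : ℤ, (K:ℤ) ≤ S ∧ ∀ n : ℤ, n < (K:ℤ) → (a n ω : ℤ) + n ≤ S := by
  have hmem : ∃ n₀ : ℕ, ∀ j : ℕ, n₀ ≤ j → a ((K:ℤ) - 1 - (j:ℤ)) ω ≤ j + 1 := by
    rw [limsup_eq_iInf_iSup_of_nat] at hω
    simp only [Set.iInf_eq_iInter, Set.iSup_eq_iUnion, Set.mem_iInter, Set.mem_iUnion,
      Set.mem_setOf_eq, not_forall, not_exists, not_lt] at hω
    obtain ⟨n₀, hn₀⟩ := hω
    exact ⟨n₀, fun j hj => hn₀ j hj⟩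
  obtain ⟨n₀, hn₀⟩ := hmem
  have hsum : 0 ≤ ∑ j ∈ Finset.range n₀, ((a ((K:ℤ) - 1 - (j:ℤ)) ω : ℕ) : ℤ) := by positivity
  refine ⟨(K:ℤ) + ∑ j ∈ Finset.range n₀, ((a ((K:ℤ) - 1 - (j:ℤ)) ω : ℕ) : ℤ),
    le_add_of_nonneg_right hsum, ?_⟩
  intro n hn
  set j : ℕ := ((K:ℤ) - 1 - n).toNat with hj
  have hjn : ((j:ℕ):ℤ) = (K:ℤ) - 1 - n := Int.toNat_of_nonneg (by omega)
  have hcoord : (K:ℤ) - 1 - (j:ℤ) = n := by omega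
  rcases le_or_gt n₀ j with h | h
  · have h2 := hn₀ j h
    rw [hcoord] at h2
    have h3 : (a n ω : ℤ) ≤ (j:ℤ) + 1 := by exact_mod_cast h2
    omega
  · have hle : ((a ((K:ℤ) - 1 - (j:ℤ)) ω : ℕ) : ℤ)
        ≤ ∑ j' ∈ Finset.range n₀, ((a ((K:ℤ) - 1 - (j':ℤ)) ω : ℕ) : ℤ) :=
      Finset.single_le_sum (f := fun j' : ℕ => ((a ((K:ℤ) - 1 - (j':ℤ)) ω : ℕ) : ℤ))
        (fun _ _ => by positivity) (Finset.mem_range.2 h)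
    rw [hcoord] at hle
    omega

lemma above_of_Vset {K : ℕ} {ω : Ω} (hV : ω ∈ Vset a K)
    (hS : ∃ S : ℤ, (K:ℤ) ≤ S ∧ ∀ n : ℤ, n < (K:ℤ) → (a n ω : ℤ) + n ≤ S) :
    ∀ M : ℤ, ∃ m : ℤ, M < m ∧ ω ∈ AA a m := by
  obtain ⟨S, hKS, hSb⟩ := hS
  intro M
  set r : ℕ := (max M S).toNat with hr
  have hrge : max M S ≤ (r:ℤ) := Int.self_le_toNat _
  simp only [Vset, Set.mem_iInter, Set.mem_iUnion] at hV
  obtain ⟨u, hu⟩ := hV r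
  refine ⟨(r:ℤ) + 1 + (u:ℤ), by omega, ?_⟩
  simp only [AA, Set.mem_iInter, Set.mem_setOf_eq]
  intro i hi
  simp only [Bset, Set.mem_iInter, Set.mem_setOf_eq] at hu
  set m : ℤ := (r:ℤ) + 1 + (u:ℤ) with hm
  rcases le_or_gt (K:ℤ) (m - (i:ℤ)) with hcase | hcase
  · exact hu i hi hcase
  · have hb := hSb (m - (i:ℤ)) hcase
    have hSm : S < m := by omega
    have : (a (m - (i:ℤ)) ω : ℤ) ≤ (i:ℤ) := by omega
    exact_mod_cast this

end AuxAll

/-- Almost surely, the set of original ancestors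
`{m ∈ ℤ : N_m = 1} = {m ∈ ℤ : a_{m-i} ≤ i for all i ≥ 1}` is infinite; in fact it is
almost surely unbounded above and unbounded below in `ℤ`. -/
theorem original_ancestors_infinite_unbounded
    {Ω : Type*} [MeasurableSpace Ω] (P : Measure Ω) [IsProbabilityMeasure P]
    (a : ℤ → Ω → ℕ) (hmeas : ∀ n, Measurable (a n)) (hpos : ∀ n ω, 1 ≤ a n ω)
    (hindep : iIndepFun a P)
    (hident : ∀ n, Measure.map (a n) P = Measure.map (a 0) P)
    (hmean : ∫⁻ ω, (a 0 ω : ℝ≥0∞) ∂P < ⊤)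
    (h1 : 0 < P {ω | a 0 ω = 1}) :
    ∀ᵐ ω ∂P,
      Set.Infinite {m : ℤ | ∀ i : ℕ, 1 ≤ i → a (m - (i : ℤ)) ω ≤ i} ∧
      (∀ M : ℤ, ∃ m : ℤ, M < m ∧ ∀ i : ℕ, 1 ≤ i → a (m - (i : ℤ)) ω ≤ i) ∧
      (∀ M : ℤ, ∃ m : ℤ, m < M ∧ ∀ i : ℕ, 1 ≤ i → a (m - (i : ℤ)) ω ≤ i) := by
  classical
  have htsum : ∑' i : ℕ, P {ω | i < a 0 ω} ≠ ∞ := tail_sum hmeas hmean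
  obtain ⟨δ, hδpos, hδ⟩ := exists_delta hindep hmeas hident htsum h1
  -- the "unbounded below" tail event
  set Lset : Set Ω := ⋂ k : ℕ, ⋃ j : ℕ, ⋃ (_ : k ≤ j), AA a (-1 - (j:ℤ)) with hLdef
  have hgL : Function.Injective (fun n : ℕ => (-1 - n : ℤ)) := fun x y h => by
    simp only at h; omega
  have hL01 := zero_or_one_of_tail hindep hmeas hgL (t := Lset)
    (fun N => meas_Lset (a := a) N)
  have hLδ : δ ≤ P Lset := delta_le_iInter_iUnion hmeas hδ _
  have hL1 : P Lset = 1 := by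
    rcases hL01 with h | h
    · exact absurd (le_antisymm (h ▸ hLδ) zero_le) hδpos.ne'
    · exact h
  -- the "unbounded above" tail event
  set tset : Set Ω := ⋃ K : ℕ, Vset a K with htdef
  have hgU : Function.Injective (fun n : ℕ => (n : ℤ)) := fun x y h => by simpa using h
  have ht01 := zero_or_one_of_tail hindep hmeas hgU (t := tset)
    (fun N => meas_tset (a := a) N)
  have hsub : (⋂ k : ℕ, ⋃ j : ℕ, ⋃ (_ : k ≤ j), AA a ((j:ℕ):ℤ)) ⊆ tset := by
    intro ω hω
    refine Set.mem_iUnion.2 ⟨0, ?_⟩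
    simp only [Vset, Set.mem_iInter, Set.mem_iUnion]
    intro r
    obtain ⟨j, hj'⟩ := Set.mem_iUnion.1 (Set.mem_iInter.1 hω (r + 1))
    obtain ⟨hj, hmem⟩ := Set.mem_iUnion.1 hj'
    refine ⟨j - (r + 1), ?_⟩
    have hco : ((r:ℤ) + 1 + ((j - (r+1) : ℕ):ℤ)) = ((j:ℕ):ℤ) := by omega
    rw [hco]
    exact AA_subset_Bset 0 _ hmem
  have htδ : δ ≤ P tset := le_trans (delta_le_iInter_iUnion hmeas hδ _) (measure_mono hsub)
  have ht1 : P tset = 1 := by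
    rcases ht01 with h | h
    · exact absurd (le_antisymm (h ▸ htδ) zero_le) hδpos.ne'
    · exact h
  -- Borel–Cantelli bad events
  have hGm : ∀ K : ℕ,
      P (limsup (fun j : ℕ => {ω | (j:ℕ) + 1 < a ((K:ℤ) - 1 - (j:ℤ)) ω}) atTop) = 0 :=
    bc_limsup hmeas hident htsum
  -- measurability in the ambient σ-algebra
  have hmeasL : MeasurableSet Lset :=
    MeasurableSet.iInter fun k => MeasurableSet.iUnion fun j => MeasurableSet.iUnion fun _ =>
      measurableSet_AA hmeas _
  have hmeasB : ∀ (K : ℕ) (m : ℤ), MeasurableSet (Bset a K m) := by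
    intro K m
    refine MeasurableSet.iInter fun i => MeasurableSet.iInter fun _ =>
      MeasurableSet.iInter fun _ => ?_
    exact (hmeas _) (MeasurableSet.of_discrete (s := Set.Iic i))
  have hmeast : MeasurableSet tset :=
    MeasurableSet.iUnion fun K => MeasurableSet.iInter fun r =>
      MeasurableSet.iUnion fun u => hmeasB _ _
  -- the negligible set
  have hbad : P (Lsetᶜ ∪ (tsetᶜ ∪ ⋃ K : ℕ,
      limsup (fun j : ℕ => {ω | (j:ℕ) + 1 < a ((K:ℤ) - 1 - (j:ℤ)) ω}) atTop)) = 0 := by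
    refine measure_union_null ?_ (measure_union_null ?_ (measure_iUnion_null fun K => hGm K))
    · rw [prob_compl_eq_one_sub hmeasL, hL1]; simp
    · rw [prob_compl_eq_one_sub hmeast, ht1]; simp
  rw [ae_iff]
  refine measure_mono_null ?_ hbad
  intro ω hω
  simp only [Set.mem_setOf_eq] at hω
  by_contra hbadmem
  apply hω
  simp only [Set.mem_union, Set.mem_compl_iff, Set.mem_iUnion, not_or, not_exists] at hbadmem
  obtain ⟨hωL, hωt, hωG⟩ := hbadmem
  rw [not_not] at hωL hωt
  have habove : ∀ M : ℤ, ∃ m : ℤ, M < m ∧ ∀ i : ℕ, 1 ≤ i → a (m - (i:ℤ)) ω ≤ i := by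
    obtain ⟨K, hK⟩ := Set.mem_iUnion.1 hωt
    have hS := bound_of_not_limsup (a := a) (hωG K)
    intro M
    obtain ⟨m, hMm, hm⟩ := above_of_Vset hK hS M
    exact ⟨m, hMm, mem_AA.1 hm⟩
  have hbelow : ∀ M : ℤ, ∃ m : ℤ, m < M ∧ ∀ i : ℕ, 1 ≤ i → a (m - (i:ℤ)) ω ≤ i := by
    intro M
    obtain ⟨j, hj'⟩ := Set.mem_iUnion.1 (Set.mem_iInter.1 hωL (-M).toNat)
    obtain ⟨hj, hmem⟩ := Set.mem_iUnion.1 hj'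
    refine ⟨-1 - (j:ℤ), ?_, mem_AA.1 hmem⟩
    have h2 : -M ≤ ((-M).toNat : ℤ) := Int.self_le_toNat _
    omega
  refine ⟨?_, habove, hbelow⟩
  by_contra hfin
  rw [Set.not_infinite] at hfin
  obtain ⟨b, hb⟩ := hfin.bddAbove
  obtain ⟨m, hMm, hm⟩ := habove b
  have := hb (Set.mem_setOf_eq ▸ hm : m ∈ {m : ℤ | ∀ i : ℕ, 1 ≤ i → a (m - (i:ℤ)) ω ≤ i})
  omega
end

section
/- For every t ∈ ℝ, the moment generating function of N_0 satisfies E[e^{t N_0}] = e^t · ∏_{i=1}^∞ ( e^t ℙ[a_0 > i] + ℙ[a_0 ≤ i] ), and moreover E[e^{t N_0}] < ∞ for all t ∈ ℝ (so N_0 is light-tailed regardless of the distribution of a_0). -/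
open MeasureTheory ProbabilityTheory Filter
open scoped ENNReal

/-- The population size at time `0`: `N₀ = 1 + #{i ≥ 1 : a_{-i} > i}` (a.s. finite
when `E[a₀] < ∞`, so the natural-number cardinality `Set.ncard` represents it a.s.). -/
noncomputable def popAtZero {Ω : Type*} (a : ℤ → Ω → ℕ) (ω : Ω) : ℕ :=
  1 + Set.ncard {i : ℕ | 1 ≤ i ∧ i < a (-(i : ℤ)) ω}

lemma nat_lintegral_eq_tsum {Ω : Type*} [MeasurableSpace Ω] (μ : Measure Ω)
    (f : Ω → ℕ) (hf : Measurable f) :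
    ∫⁻ ω, (f ω : ℝ≥0∞) ∂μ = ∑' i : ℕ, μ {ω | i < f ω} := by
  have hset : ∀ i : ℕ, MeasurableSet {ω | i < f ω} := fun i =>
    hf MeasurableSpace.measurableSet_top
  have key : ∀ ω, (f ω : ℝ≥0∞) =
      ∑' i : ℕ, Set.indicator {ω | i < f ω} (fun _ => (1 : ℝ≥0∞)) ω := by
    intro ω
    have : ∀ i : ℕ, Set.indicator {ω | i < f ω} (fun _ => (1 : ℝ≥0∞)) ω
        = if i ∈ Finset.range (f ω) then (1:ℝ≥0∞) else 0 := by
      intro i; simp [Set.indicator, Finset.mem_range]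
    rw [tsum_congr fun i => this i,
      tsum_eq_sum (s := Finset.range (f ω)) (fun i hi => if_neg hi),
      Finset.sum_congr rfl (fun i hi => if_pos hi), Finset.sum_const]
    simp
  calc ∫⁻ ω, (f ω : ℝ≥0∞) ∂μ
      = ∫⁻ ω, ∑' i : ℕ, Set.indicator {ω | i < f ω} (fun _ => (1 : ℝ≥0∞)) ω ∂μ :=
        lintegral_congr key
    _ = ∑' i : ℕ, ∫⁻ ω, Set.indicator {ω | i < f ω} (fun _ => (1 : ℝ≥0∞)) ω ∂μ :=
        lintegral_tsum fun i => ((measurable_one).indicator (hset i)).aemeasurable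
    _ = ∑' i : ℕ, μ {ω | i < f ω} := by
        refine tsum_congr fun i => ?_
        rw [lintegral_indicator (hset i)]
        simp

lemma prod_lintegral_of_iIndepFun {Ω : Type*} [MeasurableSpace Ω] {μ : Measure Ω}
    [IsProbabilityMeasure μ] {F : ℕ → Ω → ℝ≥0∞}
    (hind : iIndepFun F μ) (hFm : ∀ i, Measurable (F i))
    (s : Finset ℕ) :
    ∫⁻ ω, ∏ i ∈ s, F i ω ∂μ = ∏ i ∈ s, ∫⁻ ω, F i ω ∂μ := by
  induction s using Finset.cons_induction with
  | empty => simp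
  | cons a s ha ih =>
    have hip : IndepFun (∏ j ∈ s, F j) (F a) μ :=
      hind.indepFun_finsetProd_of_notMem hFm ha
    have hm : Measurable (∏ j ∈ s, F j) := by
      rw [show (∏ j ∈ s, F j) = fun ω => ∏ j ∈ s, F j ω from funext fun ω => by
        simp [Finset.prod_apply]]
      exact Finset.measurable_prod _ fun j _ => hFm j
    have h2 := lintegral_mul_eq_lintegral_mul_lintegral_of_indepFun''
      hm.aemeasurable (hFm a).aemeasurable hip
    simp only [Finset.prod_apply] at h2
    simp only [Finset.prod_cons]
    calc ∫⁻ ω, F a ω * ∏ i ∈ s, F i ω ∂μ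
        = ∫⁻ ω, (∏ i ∈ s, F i ω) * F a ω ∂μ := by
          refine lintegral_congr fun ω => mul_comm _ _
      _ = (∫⁻ ω, ∏ i ∈ s, F i ω ∂μ) * ∫⁻ ω, F a ω ∂μ := h2
      _ = (∫⁻ ω, F a ω ∂μ) * ∏ i ∈ s, ∫⁻ ω, F i ω ∂μ := by rw [ih, mul_comm]

lemma iIndepFun_neg_nat {Ω : Type*} [MeasurableSpace Ω] {μ : Measure Ω} {a : ℤ → Ω → ℕ}
    (h : iIndepFun a μ) :
    iIndepFun (fun i : ℕ => a (-(i : ℤ))) μ := by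
  rw [iIndepFun_iff_measure_inter_preimage_eq_mul]
  intro S sets _
  have key := h.measure_inter_preimage_eq_mul
    (S.map ⟨fun i : ℕ => -(i : ℤ), fun x y hxy => Nat.cast_injective (neg_injective hxy)⟩)
    (sets := fun z => sets z.natAbs)
    (fun z _ => MeasurableSpace.measurableSet_top)
  have h1 : (⋂ z ∈ S.map ⟨fun i : ℕ => -(i : ℤ), fun x y hxy => Nat.cast_injective (neg_injective hxy)⟩,
      a z ⁻¹' sets z.natAbs) = ⋂ i ∈ S, a (-(i : ℤ)) ⁻¹' sets i := by
    ext ω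
    simp only [Set.mem_iInter, Finset.mem_map, Function.Embedding.coeFn_mk]
    constructor
    · intro hz i hi
      have := hz (-(i : ℤ)) ⟨i, hi, rfl⟩
      simpa using this
    · rintro hi z ⟨i, hiS, rfl⟩
      show a (-(i : ℤ)) ω ∈ sets (-(i : ℤ)).natAbs
      simpa using hi i hiS
  have h2 : (∏ z ∈ S.map ⟨fun i : ℕ => -(i : ℤ), fun x y hxy => Nat.cast_injective (neg_injective hxy)⟩,
      μ (a z ⁻¹' sets z.natAbs)) = ∏ i ∈ S, μ (a (-(i : ℤ)) ⁻¹' sets i) := by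
    rw [Finset.prod_map]
    refine Finset.prod_congr rfl fun i _ => ?_
    show μ (a (-(i : ℤ)) ⁻¹' sets (-(i : ℤ)).natAbs) = _
    simp
  rw [h1, h2] at key
  exact key

/-- For every `t ∈ ℝ`, the moment generating function of `N₀` satisfies
`E[e^{t N₀}] = e^t ∏_{i=1}^∞ (e^t ℙ[a₀ > i] + ℙ[a₀ ≤ i])` (the infinite product being
the limit of partial products), and moreover `E[e^{t N₀}] < ∞` for all `t ∈ ℝ`, so `N₀`
is light-tailed regardless of the distribution of `a₀`. -/
theorem mgf_N_zero_formula_and_finite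
    {Ω : Type*} [MeasurableSpace Ω] (P : Measure Ω) [IsProbabilityMeasure P]
    (a : ℤ → Ω → ℕ) (hmeas : ∀ n, Measurable (a n)) (hpos : ∀ n ω, 1 ≤ a n ω)
    (hindep : iIndepFun a P)
    (hident : ∀ n, Measure.map (a n) P = Measure.map (a 0) P)
    (hmean : ∫⁻ ω, (a 0 ω : ℝ≥0∞) ∂P < ⊤) :
    ∀ t : ℝ,
      Tendsto
        (fun I : ℕ =>
          ENNReal.ofReal (Real.exp t) *
            ∏ i ∈ Finset.Icc 1 I,
              (ENNReal.ofReal (Real.exp t) * P {ω | i < a 0 ω} + P {ω | a 0 ω ≤ i}))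
        atTop
        (nhds (∫⁻ ω, ENNReal.ofReal (Real.exp (t * (popAtZero a ω : ℝ))) ∂P)) ∧
      ∫⁻ ω, ENNReal.ofReal (Real.exp (t * (popAtZero a ω : ℝ))) ∂P < ⊤ := by
  intro t
  set c : ℝ≥0∞ := ENNReal.ofReal (Real.exp t) with hc
  set F : ℕ → Ω → ℝ≥0∞ := fun i ω => if i < a (-(i:ℤ)) ω then c else 1 with hF
  set h : Ω → ℝ≥0∞ := fun ω => ENNReal.ofReal (Real.exp (t * (popAtZero a ω : ℝ))) with hh
  set g : ℕ → Ω → ℝ≥0∞ := fun I ω => c * ∏ i ∈ Finset.Icc 1 I, F i ω with hg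
  have hsetm : ∀ (n : ℤ) (i : ℕ), MeasurableSet {ω | i < a n ω} := fun n i =>
    hmeas n MeasurableSpace.measurableSet_top
  have hsetm' : ∀ (i : ℕ), MeasurableSet {ω | a 0 ω ≤ i} := fun i =>
    hmeas 0 (show MeasurableSet {m : ℕ | m ≤ i} from MeasurableSpace.measurableSet_top)
  have hFm : ∀ i, Measurable (F i) := fun i =>
    Measurable.ite (hsetm _ i) measurable_const measurable_const
  have hgm : ∀ I, Measurable (g I) :=
    fun I => measurable_const.mul (Finset.measurable_prod _ fun i _ => hFm i)
  -- independence of the F family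
  have hFind : iIndepFun F P := by
    have := (iIndepFun_neg_nat hindep).comp
      (fun i (n : ℕ) => if i < n then c else 1) (fun i => measurable_from_top)
    exact this
  -- identical distribution transfer
  have hid_lint : ∀ (n : ℤ) (φ : ℕ → ℝ≥0∞),
      ∫⁻ ω, φ (a n ω) ∂P = ∫⁻ ω, φ (a 0 ω) ∂P := by
    intro n φ
    have hφ : Measurable φ := measurable_from_top
    rw [← lintegral_map hφ (hmeas n), hident n, lintegral_map hφ (hmeas 0)]
  have hid_set : ∀ (n : ℤ) (s : Set ℕ), P (a n ⁻¹' s) = P (a 0 ⁻¹' s) := by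
    intro n s
    have hs : MeasurableSet s := MeasurableSpace.measurableSet_top
    rw [← Measure.map_apply (hmeas n) hs, hident n, Measure.map_apply (hmeas 0) hs]
  -- single factor integral
  have hsingle : ∀ i : ℕ,
      ∫⁻ ω, F i ω ∂P = c * P {ω | i < a 0 ω} + P {ω | a 0 ω ≤ i} := by
    intro i
    have h1 : ∫⁻ ω, F i ω ∂P = ∫⁻ ω, (if i < a 0 ω then c else 1) ∂P :=
      hid_lint (-(i:ℤ)) (fun n => if i < n then c else 1)
    rw [h1]
    have hsplit : ∀ ω, (if i < a 0 ω then c else 1)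
        = Set.indicator {ω | i < a 0 ω} (fun _ => c) ω
          + Set.indicator {ω | a 0 ω ≤ i} (fun _ => (1:ℝ≥0∞)) ω := by
      intro ω
      by_cases hlt : i < a 0 ω
      · simp [Set.indicator, hlt, Nat.not_le.2 hlt]
      · simp [Set.indicator, hlt, Nat.le_of_not_lt hlt]
    rw [lintegral_congr hsplit,
      lintegral_add_left (measurable_const.indicator (hsetm 0 i)),
      lintegral_indicator (hsetm 0 i), lintegral_indicator (hsetm' i)]
    simp [mul_comm]
  -- step A : the integral of g I is the stated partial product
  have hA : ∀ I : ℕ, ∫⁻ ω, g I ω ∂P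
      = c * ∏ i ∈ Finset.Icc 1 I, (c * P {ω | i < a 0 ω} + P {ω | a 0 ω ≤ i}) := by
    intro I
    rw [hg]
    rw [lintegral_const_mul _ (Finset.measurable_prod _ fun i _ => hFm i)]
    rw [prod_lintegral_of_iIndepFun hFind hFm]
    exact congrArg (c * ·) (Finset.prod_congr rfl fun i _ => hsingle i)
  -- Borel-Cantelli
  have hsum_eq : ∀ i : ℕ, P {ω | i < a (-(i:ℤ)) ω} = P {ω | i < a 0 ω} := fun i =>
    hid_set (-(i:ℤ)) {n | i < n}
  have htsum : ∑' i : ℕ, P {ω | i < a 0 ω} ≠ ∞ := by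
    rw [← nat_lintegral_eq_tsum P (a 0) (hmeas 0)]; exact hmean.ne
  have hBC : ∀ᵐ ω ∂P, ∀ᶠ i : ℕ in atTop, ω ∉ {ω | i < a (-(i:ℤ)) ω} :=
    ae_eventually_notMem (by rw [tsum_congr hsum_eq]; exact htsum)
  -- key pointwise identification
  have hkey : ∀ ω, (∀ᶠ i : ℕ in atTop, ω ∉ {ω | i < a (-(i:ℤ)) ω}) →
      ∃ n : ℕ, ∀ I, n ≤ I → g I ω = h ω := by
    intro ω hev
    obtain ⟨n, hn⟩ := eventually_atTop.1 hev
    set S : Set ℕ := {i : ℕ | 1 ≤ i ∧ i < a (-(i:ℤ)) ω} with hS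
    have hSsub : ∀ i ∈ S, i < n := by
      intro i hi
      by_contra hni
      exact hn i (Nat.le_of_not_lt hni) hi.2
    have hSfin : S.Finite := (Set.finite_Iio n).subset hSsub
    refine ⟨n, fun I hI => ?_⟩
    have hfe : (Finset.Icc 1 I).filter (fun i : ℕ => i < a (-(i:ℤ)) ω) = hSfin.toFinset := by
      ext i
      simp only [Finset.mem_filter, Finset.mem_Icc, Set.Finite.mem_toFinset]
      constructor
      · rintro ⟨⟨h1, _⟩, h2⟩; exact ⟨h1, h2⟩
      · rintro ⟨h1, h2⟩
        exact ⟨⟨h1, le_trans (le_of_lt (hSsub i ⟨h1, h2⟩)) hI⟩, h2⟩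
    have hprod : ∏ i ∈ Finset.Icc 1 I, F i ω = c ^ S.ncard := by
      rw [hF]
      simp only
      rw [Finset.prod_ite (f := fun _ => c) (g := fun _ => (1:ℝ≥0∞)),
        Finset.prod_const, Finset.prod_const, one_pow, mul_one, hfe,
        Set.ncard_eq_toFinset_card S hSfin]
    have hNc : h ω = c ^ (popAtZero a ω) := by
      rw [hh, hc]
      simp only
      rw [show t * (popAtZero a ω : ℝ) = (popAtZero a ω : ℝ) * t from mul_comm _ _,
        Real.exp_nat_mul, ENNReal.ofReal_pow (Real.exp_nonneg t)]
    rw [hg]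
    simp only
    rw [hprod, hNc, popAtZero, pow_add, pow_one]
  -- a.e. convergence
  have hae_tendsto : ∀ᵐ ω ∂P, Tendsto (fun I => g I ω) atTop (nhds (h ω)) := by
    filter_upwards [hBC] with ω hev
    obtain ⟨n, hn⟩ := hkey ω hev
    refine Tendsto.congr' ?_ (tendsto_const_nhds (x := h ω))
    exact eventually_atTop.2 ⟨n, fun I hI => (hn I hI).symm⟩
  rcases le_or_gt 0 t with ht | ht
  · -- case 0 ≤ t : monotone convergence
    have hc1 : 1 ≤ c := by
      rw [hc]
      exact ENNReal.one_le_ofReal.2 (Real.one_le_exp ht)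
    have hFone : ∀ i ω, 1 ≤ F i ω := by
      intro i ω; rw [hF]; simp only
      split
      · exact hc1
      · exact le_rfl
    have hmono : Monotone g := by
      intro I J hIJ ω
      exact mul_le_mul_right (Finset.prod_le_prod_of_subset_of_one_le'
        (Finset.Icc_subset_Icc_right hIJ) (fun i _ _ => hFone i ω)) c
    have hmono' : Monotone (fun I => ∫⁻ ω, g I ω ∂P) :=
      fun I J hIJ => lintegral_mono (hmono hIJ)
    have hsup1 : (⨆ I, ∫⁻ ω, g I ω ∂P) = ∫⁻ ω, ⨆ I, g I ω ∂P :=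
      (lintegral_iSup hgm fun I J hIJ => hmono hIJ).symm
    have hsup2 : ∫⁻ ω, ⨆ I, g I ω ∂P = ∫⁻ ω, h ω ∂P := by
      refine lintegral_congr_ae ?_
      filter_upwards [hBC] with ω hev
      obtain ⟨n, hn⟩ := hkey ω hev
      refine le_antisymm (iSup_le fun I => ?_) (le_iSup_of_le n (hn n le_rfl).ge)
      calc g I ω ≤ g (max I n) ω := hmono (le_max_left _ _) ω
        _ = h ω := hn _ (le_max_right _ _)
    have hTend : Tendsto (fun I => ∫⁻ ω, g I ω ∂P) atTop (nhds (∫⁻ ω, h ω ∂P)) := by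
      rw [← hsup2, ← hsup1]
      exact tendsto_atTop_iSup hmono'
    -- finiteness
    have hfin : ∫⁻ ω, h ω ∂P < ⊤ := by
      rw [← hsup2, ← hsup1]
      set Creal : ℝ := (∑' i : ℕ, P {ω | i < a 0 ω}).toReal with hCreal
      have hbound : ∀ I : ℕ, ∫⁻ ω, g I ω ∂P
          ≤ ENNReal.ofReal (Real.exp t * Real.exp ((Real.exp t - 1) * Creal)) := by
        intro I
        rw [hA I]
        set r : ℕ → ℝ := fun i => (P {ω | i < a 0 ω}).toReal with hr
        have hpne : ∀ i : ℕ, P {ω | i < a 0 ω} ≠ ⊤ := fun i => measure_ne_top _ _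
        have hr01 : ∀ i, 0 ≤ r i ∧ r i ≤ 1 := by
          intro i
          constructor
          · exact ENNReal.toReal_nonneg
          · rw [hr]
            simp only
            rw [show (1:ℝ) = (1:ℝ≥0∞).toReal by simp]
            exact ENNReal.toReal_mono (by simp) prob_le_one
        have hcompl : ∀ i : ℕ, P {ω | a 0 ω ≤ i} = 1 - P {ω | i < a 0 ω} := by
          intro i
          have : {ω | a 0 ω ≤ i} = {ω | i < a 0 ω}ᶜ := by
            ext ω; simp [Nat.not_lt]
          rw [this, prob_compl_eq_one_sub (hsetm 0 i)]
        have hterm : ∀ i : ℕ, c * P {ω | i < a 0 ω} + P {ω | a 0 ω ≤ i}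
            = ENNReal.ofReal (Real.exp t * r i + (1 - r i)) := by
          intro i
          rw [hcompl i, ENNReal.ofReal_add (by positivity) (by
            have := (hr01 i).2; linarith),
            ENNReal.ofReal_mul (Real.exp_nonneg t),
            ENNReal.ofReal_toReal (hpne i), ENNReal.ofReal_sub _ ENNReal.toReal_nonneg,
            ENNReal.ofReal_one, ENNReal.ofReal_toReal (hpne i), hc]
        rw [Finset.prod_congr rfl fun i _ => hterm i,
          ← ENNReal.ofReal_prod_of_nonneg (fun i _ => by
            have := (hr01 i).1; have := (hr01 i).2; nlinarith [Real.exp_nonneg t]),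
          hc, ← ENNReal.ofReal_mul (Real.exp_nonneg t)]
        refine ENNReal.ofReal_le_ofReal ?_
        refine mul_le_mul_of_nonneg_left ?_ (Real.exp_nonneg t)
        calc ∏ i ∈ Finset.Icc 1 I, (Real.exp t * r i + (1 - r i))
            ≤ ∏ i ∈ Finset.Icc 1 I, Real.exp ((Real.exp t - 1) * r i) := by
              refine Finset.prod_le_prod (fun i _ => by
                have := (hr01 i).1; have := (hr01 i).2
                nlinarith [Real.exp_nonneg t]) (fun i _ => ?_)
              have := Real.add_one_le_exp ((Real.exp t - 1) * r i)
              nlinarith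
          _ = Real.exp (∑ i ∈ Finset.Icc 1 I, (Real.exp t - 1) * r i) :=
              (Real.exp_sum _ _).symm
          _ ≤ Real.exp ((Real.exp t - 1) * Creal) := by
              refine Real.exp_le_exp.2 ?_
              rw [← Finset.mul_sum]
              refine mul_le_mul_of_nonneg_left ?_ (by
                have := Real.one_le_exp ht; linarith)
              rw [hCreal, hr]
              simp only
              rw [← ENNReal.toReal_sum (fun i _ => hpne i)]
              exact ENNReal.toReal_mono htsum (ENNReal.sum_le_tsum _)
      exact lt_of_le_of_lt (iSup_le hbound) ENNReal.ofReal_lt_top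
    constructor
    · have heq : (fun I : ℕ => c * ∏ i ∈ Finset.Icc 1 I,
          (c * P {ω | i < a 0 ω} + P {ω | a 0 ω ≤ i})) = fun I => ∫⁻ ω, g I ω ∂P :=
        funext fun I => (hA I).symm
      rw [heq]
      exact hTend
    · exact hfin
  · -- case t < 0 : dominated convergence
    have hc1 : c ≤ 1 := by
      rw [hc]
      exact ENNReal.ofReal_le_one.2 (by
        calc Real.exp t ≤ Real.exp 0 := Real.exp_le_exp.2 ht.le
          _ = 1 := Real.exp_zero)
    have hFle : ∀ i ω, F i ω ≤ 1 := by
      intro i ω; rw [hF]; simp only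
      split
      · exact hc1
      · exact le_rfl
    have hgle : ∀ I ω, g I ω ≤ 1 := by
      intro I ω
      rw [hg]
      simp only
      exact mul_le_one' hc1 (Finset.prod_le_one' fun i _ => hFle i ω)
    have hTend : Tendsto (fun I => ∫⁻ ω, g I ω ∂P) atTop (nhds (∫⁻ ω, h ω ∂P)) := by
      refine tendsto_lintegral_of_dominated_convergence (bound := fun _ => 1)
        hgm (fun I => ae_of_all _ fun ω => hgle I ω) (by simp) hae_tendsto
    constructor
    · have heq : (fun I : ℕ => c * ∏ i ∈ Finset.Icc 1 I,
          (c * P {ω | i < a 0 ω} + P {ω | a 0 ω ≤ i})) = fun I => ∫⁻ ω, g I ω ∂P :=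
        funext fun I => (hA I).symm
      rw [heq]
      exact hTend
    · have hle1 : ∀ ω, h ω ≤ 1 := by
        intro ω
        rw [hh]
        simp only
        rw [show (1:ℝ≥0∞) = ENNReal.ofReal 1 by simp]
        refine ENNReal.ofReal_le_ofReal ?_
        rw [show (1:ℝ) = Real.exp 0 from Real.exp_zero.symm]
        refine Real.exp_le_exp.2 ?_
        exact mul_nonpos_of_nonpos_of_nonneg ht.le (Nat.cast_nonneg _)
      calc ∫⁻ ω, h ω ∂P ≤ ∫⁻ _, 1 ∂P := lintegral_mono hle1
        _ = 1 := by simp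
        _ < ⊤ := ENNReal.one_lt_top
end

section
/- Suppose a_0 is geometric on {1,2,…} with parameter s ∈ (0,1), i.e., ℙ[a_0 = k] = s(1−s)^{k−1} for k ≥ 1, and set r = 1−s. Let G(z) = E[z^{N_0}] for z ∈ [0,1] be the probability generating function of N_0. Then G(z) = z · ∏_{i=1}^∞ ( z r^i + 1 − r^i ), and G satisfies the functional equation G(z) = z · G(r z + s) for all z ∈ [0,1]. -/
open MeasureTheory ProbabilityTheory Filter
open scoped ENNReal

section Aux
variable {Ω : Type*} [MeasurableSpace Ω] {P : Measure Ω} [IsProbabilityMeasure P]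

lemma integrable_prod_bdd {g : ℤ → Ω → ℝ} (hm : ∀ n, Measurable (g n))
    (hbd : ∀ n ω, |g n ω| ≤ 1) (t : Finset ℤ) :
    Integrable (fun ω => ∏ n ∈ t, g n ω) P := by
  refine (integrable_const (1:ℝ)).mono'
    ((Finset.measurable_prod t fun n _ => hm n).aestronglyMeasurable) (ae_of_all _ fun ω => ?_)
  rw [Real.norm_eq_abs, Finset.abs_prod]
  exact Finset.prod_le_one (fun n _ => abs_nonneg _) (fun n _ => hbd n ω)

lemma integral_prod_indep {g : ℤ → Ω → ℝ}
    (hind : iIndepFun g P)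
    (hm : ∀ n, Measurable (g n)) (hbd : ∀ n ω, |g n ω| ≤ 1) (t : Finset ℤ) :
    ∫ ω, ∏ n ∈ t, g n ω ∂P = ∏ n ∈ t, ∫ ω, g n ω ∂P := by
  classical
  induction t using Finset.induction with
  | empty => simp
  | insert _ _ hi =>
    rename_i i t ih
    have hint : Integrable (fun ω => ∏ n ∈ t, g n ω) P := integrable_prod_bdd hm hbd t
    have hgi : Integrable (g i) P := by
      refine (integrable_const (1:ℝ)).mono' (hm i).aestronglyMeasurable
        (ae_of_all _ fun ω => ?_)
      simpa using hbd i ω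
    have hIF : IndepFun (g i) (fun ω => ∏ n ∈ t, g n ω) P := by
      have h := (hind.indepFun_finsetProd_of_notMem hm hi).symm
      have heq : (∏ j ∈ t, g j) = fun ω => ∏ n ∈ t, g n ω := by
        funext ω; simp [Finset.prod_apply]
      rwa [heq] at h
    calc ∫ ω, ∏ n ∈ insert i t, g n ω ∂P
        = ∫ ω, g i ω * ∏ n ∈ t, g n ω ∂P := by
          simp only [Finset.prod_insert hi]
      _ = (∫ ω, g i ω ∂P) * ∫ ω, ∏ n ∈ t, g n ω ∂P :=
          hIF.integral_fun_mul_eq_mul_integral hgi.aestronglyMeasurable hint.aestronglyMeasurable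
      _ = ∏ n ∈ insert i t, ∫ ω, g n ω ∂P := by
          rw [Finset.prod_insert hi, ih]
end Aux

lemma tail_prob {Ω : Type*} [MeasurableSpace Ω] {P : Measure Ω} [IsProbabilityMeasure P]
    {a0 : Ω → ℕ} (hm : Measurable a0) (hpos : ∀ ω, 1 ≤ a0 ω)
    {s : ℝ} (hs : 0 < s) (hs1 : s < 1)
    (hgeom : ∀ k : ℕ, 1 ≤ k → P {ω | a0 ω = k} = ENNReal.ofReal (s * (1 - s) ^ (k - 1)))
    (i : ℕ) : P {ω | i < a0 ω} = ENNReal.ofReal ((1 - s) ^ i) := by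
  have hr0 : (0:ℝ) ≤ 1 - s := by linarith
  have hr1 : (1:ℝ) - s < 1 := by linarith
  have hU : {ω | i < a0 ω} = ⋃ k : ℕ, {ω | a0 ω = i + 1 + k} := by
    ext ω
    simp only [Set.mem_setOf_eq, Set.mem_iUnion]
    constructor
    · intro h; exact ⟨a0 ω - i - 1, by omega⟩
    · rintro ⟨k, hk⟩; omega
  have hmeas : ∀ k : ℕ, MeasurableSet {ω | a0 ω = i + 1 + k} := fun k =>
    hm (measurableSet_singleton _)
  have hdisj : Pairwise (Function.onFun Disjoint fun k => {ω | a0 ω = i + 1 + k}) := by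
    intro k l hkl
    refine Set.disjoint_left.2 fun ω h1 h2 => ?_
    simp only [Set.mem_setOf_eq] at h1 h2; omega
  have hsum : Summable (fun k : ℕ => s * (1 - s) ^ (i + k)) := by
    have : Summable (fun k : ℕ => (1 - s) ^ k) := summable_geometric_of_lt_one hr0 hr1
    simpa [pow_add, mul_comm, mul_left_comm, mul_assoc] using (this.mul_left (s * (1 - s) ^ i))
  have htsum : (∑' k : ℕ, s * (1 - s) ^ (i + k)) = (1 - s) ^ i := by
    have hg : (∑' k : ℕ, (1 - s) ^ k) = (1 - (1 - s))⁻¹ :=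
      tsum_geometric_of_lt_one hr0 hr1
    calc (∑' k : ℕ, s * (1 - s) ^ (i + k))
        = ∑' k : ℕ, (s * (1 - s) ^ i) * (1 - s) ^ k := by
          congr 1; funext k; rw [pow_add]; ring
      _ = (s * (1 - s) ^ i) * (1 - (1 - s))⁻¹ := by rw [tsum_mul_left, hg]
      _ = (1 - s) ^ i := by rw [sub_sub_cancel, mul_comm s, mul_assoc, mul_inv_cancel₀ hs.ne', mul_one]
  rw [hU, measure_iUnion hdisj hmeas]
  calc (∑' k : ℕ, P {ω | a0 ω = i + 1 + k})
      = ∑' k : ℕ, ENNReal.ofReal (s * (1 - s) ^ (i + k)) := by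
        congr 1; funext k
        rw [hgeom (i + 1 + k) (by omega)]
        have h1 : i + 1 + k - 1 = i + k := by omega
        rw [h1]
    _ = ENNReal.ofReal (∑' k : ℕ, s * (1 - s) ^ (i + k)) :=
        (ENNReal.ofReal_tsum_of_nonneg (fun k => by positivity) hsum).symm
    _ = ENNReal.ofReal ((1 - s) ^ i) := by rw [htsum]

lemma integral_ite_pred {Ω : Type*} [MeasurableSpace Ω] {P : Measure Ω}
    [IsProbabilityMeasure P] {p : Ω → Prop} [DecidablePred p]
    (hp : MeasurableSet {ω | p ω}) (z : ℝ) :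
    ∫ ω, (if p ω then z else 1) ∂P = (z - 1) * (P {ω | p ω}).toReal + 1 := by
  have hpt : (fun ω => if p ω then z else 1)
      = fun ω => Set.indicator {ω | p ω} (fun _ => z - 1) ω + 1 := by
    funext ω
    by_cases h : p ω <;> simp [h]
  rw [hpt, integral_add ((integrable_const (z - 1)).indicator hp) (integrable_const 1),
    integral_indicator_const _ hp, integral_const]
  simp [smul_eq_mul, mul_comm]
  exact Or.inl rfl

-- popAtZero def and theorem appended below

/-- Suppose `a₀` is geometric on `{1,2,…}` with parameter `s ∈ (0,1)`,
i.e. `ℙ[a₀ = k] = s (1-s)^{k-1}` for `k ≥ 1`, and set `r = 1 - s`. Let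
`G(z) = E[z^{N₀}]`, `z ∈ [0,1]`, be the probability generating function of `N₀`. Then
`G(z) = z ∏_{i=1}^∞ (z rⁱ + 1 − rⁱ)` (the infinite product being the limit of the
partial products), and `G` satisfies the functional equation `G(z) = z G(rz + s)` for
all `z ∈ [0,1]`. -/
theorem pgf_N_zero_geometric
    {Ω : Type*} [MeasurableSpace Ω] (P : Measure Ω) [IsProbabilityMeasure P]
    (a : ℤ → Ω → ℕ) (hmeas : ∀ n, Measurable (a n)) (hpos : ∀ n ω, 1 ≤ a n ω)
    (hindep : iIndepFun a P)
    (hident : ∀ n, Measure.map (a n) P = Measure.map (a 0) P)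
    (s r : ℝ) (hs : 0 < s) (hs1 : s < 1) (hr : r = 1 - s)
    (hgeom : ∀ k : ℕ, 1 ≤ k →
      P {ω | a 0 ω = k} = ENNReal.ofReal (s * (1 - s) ^ (k - 1)))
    (G : ℝ → ℝ) (hG : ∀ z : ℝ, G z = ∫ ω, z ^ popAtZero a ω ∂P) :
    (∀ z ∈ Set.Icc (0 : ℝ) 1,
      Tendsto (fun I : ℕ => z * ∏ i ∈ Finset.Icc 1 I, (z * r ^ i + 1 - r ^ i))
        atTop (nhds (G z))) ∧
    (∀ z ∈ Set.Icc (0 : ℝ) 1, G z = z * G (r * z + s)) := by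
  classical
  have hr0 : (0:ℝ) ≤ r := by rw [hr]; linarith
  have hr1 : r < 1 := by rw [hr]; linarith
  -- tail probabilities
  have htail : ∀ (n : ℤ) (i : ℕ), P {ω | i < a n ω} = ENNReal.ofReal (r ^ i) := by
    intro n i
    have hSm : MeasurableSet {m : ℕ | i < m} := (Set.to_countable _).measurableSet
    have h1 : P {ω | i < a n ω} = Measure.map (a n) P {m | i < m} := by
      rw [Measure.map_apply (hmeas n) hSm]; rfl
    rw [h1, hident n, Measure.map_apply (hmeas 0) hSm, hr]
    exact tail_prob (hmeas 0) (hpos 0) hs hs1 hgeom i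
  -- event measurability
  have hEm : ∀ i : ℕ, MeasurableSet {ω | i < a (-(i:ℤ)) ω} := fun i =>
    (hmeas (-(i:ℤ))) ((Set.to_countable {m : ℕ | i < m}).measurableSet)
  -- a.s. finiteness of the population set
  have hfin : ∀ᵐ ω ∂P, {i : ℕ | 1 ≤ i ∧ i < a (-(i:ℤ)) ω}.Finite := by
    set E : ℕ → Set Ω := fun i => {ω | 1 ≤ i ∧ i < a (-(i:ℤ)) ω} with hE
    have hle : ∀ i, P (E i) ≤ ENNReal.ofReal (r ^ i) := by
      intro i
      rcases Nat.eq_zero_or_pos i with h0 | h1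
      · have : E i = ∅ := by ext ω; simp [hE, h0]
        simp [this]
      · have : E i = {ω | i < a (-(i:ℤ)) ω} := by
          ext ω
          simp only [hE, Set.mem_setOf_eq]
          exact ⟨fun h => h.2, fun h => ⟨h1, h⟩⟩
        rw [this, htail]
    have hne : (∑' i, P (E i)) ≠ ∞ := by
      have h2 : (∑' i : ℕ, ENNReal.ofReal (r ^ i)) = ENNReal.ofReal (∑' i : ℕ, r ^ i) :=
        (ENNReal.ofReal_tsum_of_nonneg (fun i => pow_nonneg hr0 i)
          (summable_geometric_of_lt_one hr0 hr1)).symm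
      exact ne_top_of_le_ne_top (by rw [h2]; exact ENNReal.ofReal_ne_top)
        (ENNReal.tsum_le_tsum hle)
    filter_upwards [ae_finite_setOf_mem hne] with ω hω
    have : {i : ℕ | 1 ≤ i ∧ i < a (-(i:ℤ)) ω} = {i : ℕ | ω ∈ E i} := by
      ext i; simp [hE]
    rw [this]; exact hω
  -- Part 1
  have part1 : ∀ z ∈ Set.Icc (0 : ℝ) 1,
      Tendsto (fun I : ℕ => z * ∏ i ∈ Finset.Icc 1 I, (z * r ^ i + 1 - r ^ i))
        atTop (nhds (G z)) := by
    rintro z ⟨hz0, hz1⟩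
    set g : ℤ → Ω → ℝ := fun n ω => if (-n).toNat < a n ω then z else 1 with hgdef
    have hgm : ∀ n, Measurable (g n) := fun n =>
      (measurable_from_nat (f := fun m => if (-n).toNat < m then z else 1)).comp (hmeas n)
    have hgbd : ∀ n ω, |g n ω| ≤ 1 := by
      intro n ω
      by_cases h : (-n).toNat < a n ω <;>
        simp [hgdef, h, abs_le]
      constructor <;> linarith
    have hgind : iIndepFun g P :=
      hindep.comp (fun n => fun m : ℕ => if (-n).toNat < m then z else 1)
        (fun n => measurable_from_nat)
    -- single-factor integrals
    have hone : ∀ i : ℕ, ∫ ω, g (-(i:ℤ)) ω ∂P = z * r ^ i + 1 - r ^ i := by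
      intro i
      have heq : (fun ω => g (-(i:ℤ)) ω)
          = fun ω => if i < a (-(i:ℤ)) ω then z else 1 := by
        funext ω; simp [hgdef]
      rw [heq, integral_ite_pred (hEm i) z, htail (-(i:ℤ)) i,
        ENNReal.toReal_ofReal (pow_nonneg hr0 i)]
      ring
    -- family of partial-population functions
    set F : ℕ → Ω → ℝ := fun I ω =>
      z ^ (1 + ((Finset.Icc 1 I).filter (fun i : ℕ => i < a (-(i:ℤ)) ω)).card) with hF
    -- Step A : ∫ F I = partial product
    have hA : ∀ I : ℕ, ∫ ω, F I ω ∂P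
        = z * ∏ i ∈ Finset.Icc 1 I, (z * r ^ i + 1 - r ^ i) := by
      intro I
      have hpoint : ∀ ω, F I ω = z * ∏ i ∈ Finset.Icc 1 I, g (-(i:ℤ)) ω := by
        intro ω
        have h1 : ∏ i ∈ Finset.Icc 1 I, g (-(i:ℤ)) ω
            = ∏ i ∈ Finset.Icc 1 I, (if i < a (-(i:ℤ)) ω then z else 1) := by
          refine Finset.prod_congr rfl fun i _ => ?_
          simp [hgdef]
        calc F I ω
            = z ^ (1 + ((Finset.Icc 1 I).filter
                (fun i : ℕ => i < a (-(i:ℤ)) ω)).card) := rfl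
          _ = z * z ^ ((Finset.Icc 1 I).filter
                (fun i : ℕ => i < a (-(i:ℤ)) ω)).card := by rw [pow_add, pow_one]
          _ = z * ∏ i ∈ Finset.Icc 1 I, g (-(i:ℤ)) ω := by
              rw [h1, Finset.prod_ite, Finset.prod_const, Finset.prod_const, one_pow,
                mul_one]
      have hinj : Set.InjOn (fun i : ℕ => -(i:ℤ)) (Finset.Icc 1 I) := by
        intro x _ y _ h
        simpa using h
      have himg : ∀ ω, ∏ i ∈ Finset.Icc 1 I, g (-(i:ℤ)) ω
          = ∏ n ∈ (Finset.Icc 1 I).image (fun i : ℕ => -(i:ℤ)), g n ω := by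
        intro ω
        rw [Finset.prod_image fun x hx y hy h => hinj hx hy h]
      calc ∫ ω, F I ω ∂P
          = ∫ ω, z * ∏ n ∈ (Finset.Icc 1 I).image (fun i : ℕ => -(i:ℤ)), g n ω ∂P := by
            refine integral_congr_ae (ae_of_all _ fun ω => ?_)
            rw [hpoint ω, himg ω]
        _ = z * ∫ ω, ∏ n ∈ (Finset.Icc 1 I).image (fun i : ℕ => -(i:ℤ)), g n ω ∂P :=
            integral_const_mul z _
        _ = z * ∏ n ∈ (Finset.Icc 1 I).image (fun i : ℕ => -(i:ℤ)), ∫ ω, g n ω ∂P := by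
            rw [integral_prod_indep hgind hgm hgbd]
        _ = z * ∏ i ∈ Finset.Icc 1 I, ∫ ω, g (-(i:ℤ)) ω ∂P := by
            rw [Finset.prod_image fun x hx y hy h => hinj hx hy h]
        _ = z * ∏ i ∈ Finset.Icc 1 I, (z * r ^ i + 1 - r ^ i) := by
            rw [Finset.prod_congr rfl fun i _ => hone i]
    -- measurability of F I
    have hFm : ∀ I : ℕ, Measurable (F I) := by
      intro I
      have hcard : Measurable (fun ω =>
          ((Finset.Icc 1 I).filter (fun i : ℕ => i < a (-(i:ℤ)) ω)).card) := by
        have : (fun ω => ((Finset.Icc 1 I).filter (fun i : ℕ => i < a (-(i:ℤ)) ω)).card)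
            = fun ω => ∑ i ∈ Finset.Icc 1 I, if (i:ℕ) < a (-(i:ℤ)) ω then 1 else 0 := by
          funext ω; rw [Finset.card_filter]
        rw [this]
        exact Finset.measurable_sum _ fun i _ =>
          Measurable.ite (hEm i) measurable_const measurable_const
      exact (measurable_from_nat (f := fun c : ℕ => z ^ (1 + c))).comp hcard
    -- a.e. convergence of F I to z ^ popAtZero
    have hconv : ∀ᵐ ω ∂P, Tendsto (fun I => F I ω) atTop (nhds (z ^ popAtZero a ω)) := by
      filter_upwards [hfin] with ω hω
      obtain ⟨n₀, hn₀⟩ := hω.bddAbove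
      refine tendsto_atTop_of_eventually_const (i₀ := n₀) fun I hI => ?_
      have hset : ((Finset.Icc 1 I).filter (fun i : ℕ => i < a (-(i:ℤ)) ω)) = hω.toFinset := by
        ext i
        simp only [Finset.mem_filter, Finset.mem_Icc, Set.Finite.mem_toFinset,
          Set.mem_setOf_eq]
        constructor
        · rintro ⟨⟨h1, _⟩, h2⟩; exact ⟨h1, h2⟩
        · rintro ⟨h1, h2⟩
          exact ⟨⟨h1, le_trans (hn₀ ⟨h1, h2⟩) hI⟩, h2⟩
      have hpop : popAtZero a ω = 1 + hω.toFinset.card := by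
        unfold popAtZero
        rw [Set.ncard_eq_toFinset_card _ hω]
      simp only [hF, hset, hpop]
    -- dominated convergence
    have hdom := tendsto_integral_of_dominated_convergence (bound := fun _ => (1:ℝ))
      (fun I => (hFm I).aestronglyMeasurable) (integrable_const 1)
      (fun I => ae_of_all _ fun ω => by
        simp only [hF, Real.norm_eq_abs]
        rw [abs_of_nonneg (pow_nonneg hz0 _)]
        exact pow_le_one₀ hz0 hz1)
      hconv
    rw [hG z]
    exact hdom.congr fun I => hA I
  refine ⟨part1, fun z hz => ?_⟩
  -- Part 2 : functional equation
  obtain ⟨hz0, hz1⟩ := hz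
  have hw : r * z + s ∈ Set.Icc (0:ℝ) 1 := by
    constructor
    · have := mul_nonneg hr0 hz0; linarith
    · nlinarith
  have h1 := part1 z ⟨hz0, hz1⟩
  have h2 := part1 (r * z + s) hw
  have hshift : ∀ I : ℕ,
      z * ((r * z + s) * ∏ i ∈ Finset.Icc 1 I, ((r * z + s) * r ^ i + 1 - r ^ i))
      = z * ∏ i ∈ Finset.Icc 1 (I + 1), (z * r ^ i + 1 - r ^ i) := by
    intro I
    have key : ∀ i : ℕ, (r * z + s) * r ^ i + 1 - r ^ i = z * r ^ (i + 1) + 1 - r ^ (i + 1) := by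
      intro i
      rw [hr]; ring
    have hIcc : ∀ (K : ℕ) (f : ℕ → ℝ),
        ∏ i ∈ Finset.Icc 1 K, f i = ∏ i ∈ Finset.range K, f (1 + i) := by
      intro K f
      rw [← Finset.Ico_add_one_right_eq_Icc, Finset.prod_Ico_eq_prod_range]
      simp
    have h3 : ∏ i ∈ Finset.Icc 1 (I + 1), (z * r ^ i + 1 - r ^ i)
        = (z * r ^ 1 + 1 - r ^ 1)
          * ∏ i ∈ Finset.Icc 1 I, (z * r ^ (i + 1) + 1 - r ^ (i + 1)) := by
      rw [hIcc (I + 1), hIcc I, Finset.prod_range_succ', mul_comm]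
      refine congrArg₂ (· * ·) (by norm_num) (Finset.prod_congr rfl fun i _ => ?_)
      have h5 : 1 + (i + 1) = 1 + i + 1 := by omega
      rw [h5]
    rw [h3]
    have h4 : z * r ^ 1 + 1 - r ^ 1 = r * z + s := by rw [hr]; ring
    rw [h4, Finset.prod_congr rfl fun i _ => key i]
  have h2' : Tendsto (fun I : ℕ => z * ∏ i ∈ Finset.Icc 1 (I + 1), (z * r ^ i + 1 - r ^ i))
      atTop (nhds (z * G (r * z + s))) := by
    have := h2.const_mul z
    simpa only [hshift, ← mul_assoc] using this
  have h1' : Tendsto (fun I : ℕ => z * ∏ i ∈ Finset.Icc 1 (I + 1), (z * r ^ i + 1 - r ^ i))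
      atTop (nhds (G z)) := h1.comp (tendsto_add_atTop_nat 1)
  exact tendsto_nhds_unique h1' h2'
end

section
/- The directed graph T^f generated by f has a single connected component: almost surely, for every pair of integers n, m there exist i, j ≥ 0 such that f^i(n) = f^j(m). -/
open MeasureTheory ProbabilityTheory Filter
open scoped ENNReal

/-- The random map `f(n) = n + a_n` generating the family tree `T^f`. -/
def genMap {Ω : Type*} (a : ℤ → Ω → ℕ) (ω : Ω) : ℤ → ℤ :=
  fun n => n + (a n ω : ℤ)

section Aux

variable {Ω : Type*}

lemma aux_iter_ge (a : ℤ → Ω → ℕ) (ω : Ω) (hpos : ∀ j, 1 ≤ a j ω) :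
    ∀ (i : ℕ) (n : ℤ), n + i ≤ (genMap a ω)^[i] n := by
  intro i
  induction i with
  | zero => simp
  | succ i ih =>
    intro n
    rw [Function.iterate_succ_apply']
    have h1 : (1 : ℤ) ≤ (a ((genMap a ω)^[i] n) ω : ℤ) := by
      exact_mod_cast hpos _
    have h2 := ih n
    show _ ≤ (genMap a ω)^[i] n + (a ((genMap a ω)^[i] n) ω : ℤ)
    push_cast
    omega

lemma aux_reach (a : ℤ → Ω → ℕ) (ω : Ω) (hpos : ∀ j, 1 ≤ a j ω) {N k : ℤ}
    (H : ∀ j : ℤ, N ≤ j → j < k → (a j ω : ℤ) ≤ k - j) :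
    ∀ (d : ℕ) (n : ℤ), N ≤ n → n ≤ k → (k - n).toNat = d →
      ∃ i : ℕ, (genMap a ω)^[i] n = k := by
  intro d
  induction d using Nat.strong_induction_on with
  | _ d ih =>
    intro n hNn hnk hd
    rcases eq_or_lt_of_le hnk with h | h
    · exact ⟨0, by simpa using h⟩
    · have hb := H n hNn h
      have h1 : (1 : ℤ) ≤ (a n ω : ℤ) := by exact_mod_cast hpos n
      set n' := genMap a ω n with hn'
      have hn'v : n' = n + (a n ω : ℤ) := rfl
      have hlt : (k - n').toNat < d := by omega
      obtain ⟨i, hi⟩ := ih _ hlt n' (by omega) (by omega) rfl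
      exact ⟨i + 1, by rw [Function.iterate_succ_apply]; exact hi⟩

lemma aux_weier (q : ℕ → ℝ≥0∞) :
    ∀ S : Finset ℕ, 1 - ∑ t ∈ S, q t ≤ ∏ t ∈ S, (1 - q t) := by
  intro S
  induction S using Finset.induction with
  | empty => simp
  | @insert x S' hx ih =>
    rw [Finset.sum_insert hx, Finset.prod_insert hx]
    set c := 1 - q x with hc
    have hc1 : c ≤ 1 := tsub_le_self
    calc 1 - (q x + ∑ t ∈ S', q t) = c - ∑ t ∈ S', q t := by
          rw [tsub_add_eq_tsub_tsub]
      _ ≤ c * (1 - ∑ t ∈ S', q t) := by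
          rw [tsub_le_iff_right]
          calc c = c * 1 := (mul_one c).symm
            _ ≤ c * ((1 - ∑ t ∈ S', q t) + ∑ t ∈ S', q t) := by
                exact mul_le_mul_right le_tsub_add c
            _ = c * (1 - ∑ t ∈ S', q t) + c * ∑ t ∈ S', q t := by ring
            _ ≤ c * (1 - ∑ t ∈ S', q t) + ∑ t ∈ S', q t := by
                exact add_le_add_right (mul_le_of_le_one_left' hc1) _
      _ ≤ c * ∏ t ∈ S', (1 - q t) := mul_le_mul_right ih c

lemma aux_sum_ite (v : ℕ) : ∀ T : ℕ,
    ∑ t ∈ Finset.range T, (if t < v then (1 : ℝ≥0∞) else 0) = ((min T v : ℕ) : ℝ≥0∞) := by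
  intro T
  induction T with
  | zero => simp
  | succ T ih =>
    rw [Finset.sum_range_succ, ih]
    by_cases h : T < v
    · rw [if_pos h]
      have : min (T+1) v = min T v + 1 := by omega
      rw [this]; push_cast; ring
    · rw [if_neg h]
      have : min (T+1) v = min T v := by omega
      rw [this, add_zero]

/-- `cutSet a N L` : the integer `N + L` is a "cut point" relative to level `N`,
i.e. no arrow starting in `[N, N+L)` jumps beyond `N + L`. -/
def cutSet (a : ℤ → Ω → ℕ) (N : ℤ) (L : ℕ) : Set Ω :=
  {ω | ∀ j : ℤ, N ≤ j → j < N + L → (a j ω : ℤ) ≤ N + L - j}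

lemma cutSet_eq (a : ℤ → Ω → ℕ) (N : ℤ) (L : ℕ) :
    cutSet a N L = ⋂ j ∈ Finset.Ico N (N + (L : ℤ)),
      a j ⁻¹' {v : ℕ | (v : ℤ) ≤ N + L - j} := by
  ext ω
  simp [cutSet, Finset.mem_Ico, Set.mem_iInter]

/-- cut points relative to level `N` are cofinal. -/
def cofin (a : ℤ → Ω → ℕ) (N : ℤ) : Set Ω :=
  {ω | ∀ K : ℕ, ∃ L : ℕ, K ≤ L ∧ ω ∈ cutSet a N L}

lemma cofin_eq (a : ℤ → Ω → ℕ) (N : ℤ) :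
    cofin a N = ⋂ K : ℕ, ⋃ L : ℕ, ⋃ (_ : K ≤ L), cutSet a N L := by
  ext ω
  simp [cofin, Set.mem_iInter, Set.mem_iUnion]

def tailSet (a : ℤ → Ω → ℕ) : Set Ω := ⋃ N : ℤ, cofin a N

lemma cofin_mono (a : ℤ → Ω → ℕ) {N M : ℤ} (hNM : N ≤ M) : cofin a N ⊆ cofin a M := by
  intro ω hω K
  obtain ⟨L, hKL, hE⟩ := hω (K + (M - N).toNat)
  refine ⟨L - (M - N).toNat, by omega, ?_⟩
  intro j h1 h2
  have h3 : (((L - (M - N).toNat : ℕ)) : ℤ) = N + L - M := by omega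
  have := hE j (by omega) (by omega)
  omega

/-- pointwise: cofinal cut points above some level imply global coalescence. -/
lemma tailSet_subset (a : ℤ → Ω → ℕ) (ω : Ω) (hpos : ∀ j, 1 ≤ a j ω)
    (hω : ω ∈ tailSet a) :
    ∀ n m : ℤ, ∃ i j : ℕ, (genMap a ω)^[i] n = (genMap a ω)^[j] m := by
  obtain ⟨s, ⟨N, rfl⟩, hD⟩ := hω
  intro n m
  set i0 := (N - n).toNat with hi0
  set j0 := (N - m).toNat with hj0
  set n' := (genMap a ω)^[i0] n with hn'
  set m' := (genMap a ω)^[j0] m with hm'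
  have hn'N : N ≤ n' := by
    have h := aux_iter_ge a ω hpos i0 n
    omega
  have hm'N : N ≤ m' := by
    have h := aux_iter_ge a ω hpos j0 m
    omega
  obtain ⟨L, hKL, hE⟩ := hD ((max n' m' - N).toNat)
  have hkn : n' ≤ N + L := by
    have h1 := le_max_left n' m'
    omega
  have hkm : m' ≤ N + L := by
    have h1 := le_max_right n' m'
    omega
  obtain ⟨i1, hi1⟩ := aux_reach a ω hpos hE _ n' hn'N hkn rfl
  obtain ⟨j1, hj1⟩ := aux_reach a ω hpos hE _ m' hm'N hkm rfl
  refine ⟨i1 + i0, j1 + j0, ?_⟩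
  rw [Function.iterate_add_apply, Function.iterate_add_apply, ← hn', ← hm', hi1, hj1]

end Aux

/-- The directed graph `T^f` generated by `f` has a single connected
component: almost surely, for every pair of integers `n, m` there exist `i, j ≥ 0`
such that `f^i(n) = f^j(m)`. -/
theorem single_connected_component
    {Ω : Type*} [MeasurableSpace Ω] (P : Measure Ω) [IsProbabilityMeasure P]
    (a : ℤ → Ω → ℕ) (hmeas : ∀ n, Measurable (a n)) (hpos : ∀ n ω, 1 ≤ a n ω)
    (hindep : iIndepFun a P)
    (hident : ∀ n, Measure.map (a n) P = Measure.map (a 0) P)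
    (hmean : ∫⁻ ω, (a 0 ω : ℝ≥0∞) ∂P < ⊤)
    (h1 : 0 < P {ω | a 0 ω = 1}) :
    ∀ᵐ ω ∂P, ∀ n m : ℤ, ∃ i j : ℕ,
      (genMap a ω)^[i] n = (genMap a ω)^[j] m := by
  classical
  -- the distribution functions
  set q : ℕ → ℝ≥0∞ := fun t => P {ω | t < a 0 ω} with hqdef
  set r : ℕ → ℝ≥0∞ := fun t => P {ω | a 0 ω ≤ t} with hrdef
  have hqm : ∀ t, MeasurableSet {ω | t < a 0 ω} := fun t =>
    hmeas 0 (MeasurableSet.of_discrete (s := {v : ℕ | t < v}))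
  have hrm : ∀ t, MeasurableSet {ω | a 0 ω ≤ t} := fun t =>
    hmeas 0 (MeasurableSet.of_discrete (s := {v : ℕ | v ≤ t}))
  have hrq : ∀ t, r t = 1 - q t := by
    intro t
    have hc : {ω | t < a 0 ω} = {ω | a 0 ω ≤ t}ᶜ := by
      ext ω; simp [not_le]
    have h := prob_compl_eq_one_sub (μ := P) (hrm t)
    rw [hrdef, hqdef]
    simp only [hc, h]
    rw [ENNReal.sub_sub_cancel ENNReal.one_ne_top prob_le_one]
  have hr1 : ∀ t, 1 ≤ t → 0 < r t := by
    intro t ht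
    refine lt_of_lt_of_le h1 (measure_mono ?_)
    intro ω hω
    simp only [Set.mem_setOf_eq] at hω ⊢
    omega
  -- summability of the tails
  have hsum : ∑' t, q t ≠ ∞ := by
    have key : ∀ T : ℕ, ∑ t ∈ Finset.range T, q t ≤ ∫⁻ ω, (a 0 ω : ℝ≥0∞) ∂P := by
      intro T
      calc ∑ t ∈ Finset.range T, q t
          = ∑ t ∈ Finset.range T, ∫⁻ ω, (if t < a 0 ω then (1:ℝ≥0∞) else 0) ∂P := by
            refine Finset.sum_congr rfl fun t _ => ?_
            show P {ω | t < a 0 ω} = _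
            rw [← lintegral_indicator_one (hqm t)]
            refine lintegral_congr fun ω => ?_
            by_cases h : t < a 0 ω <;> simp [Set.indicator_apply, h]
        _ = ∫⁻ ω, ∑ t ∈ Finset.range T, (if t < a 0 ω then (1:ℝ≥0∞) else 0) ∂P := by
            rw [lintegral_finset_sum]
            intro t _
            exact Measurable.ite (hqm t) measurable_const measurable_const
        _ ≤ ∫⁻ ω, (a 0 ω : ℝ≥0∞) ∂P := by
            refine lintegral_mono fun ω => ?_
            rw [aux_sum_ite]
            exact_mod_cast Nat.cast_le.mpr (min_le_right T (a 0 ω))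
    rw [ENNReal.tsum_eq_iSup_nat]
    exact (iSup_le fun T => key T).trans_lt hmean |>.ne
  obtain ⟨T1, hT1⟩ : ∃ T1 : ℕ, ∑' t, q (t + T1) ≤ 1/2 := by
    have h := ENNReal.tendsto_sum_nat_add q hsum
    have h2 : ∀ᶠ T1 in atTop, ∑' t, q (t + T1) < 1/2 :=
      h.eventually_lt_const (by norm_num)
    obtain ⟨T1, hT1⟩ := h2.exists
    exact ⟨T1, hT1.le⟩
  -- the uniform lower bound p
  set p : ℝ≥0∞ := (∏ t ∈ Finset.Ioc 0 T1, r t) * (1/2) with hpdef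
  have hp0 : 0 < p := by
    rw [hpdef, pos_iff_ne_zero]
    refine mul_ne_zero ?_ (by norm_num)
    refine Finset.prod_ne_zero_iff.mpr fun t ht => ?_
    exact (hr1 t (Finset.mem_Ioc.mp ht).1).ne'
  have hprod : ∀ L : ℕ, p ≤ ∏ t ∈ Finset.Ioc 0 L, r t := by
    intro L
    rcases le_or_gt L T1 with h | h
    · have hsplit : (∏ t ∈ Finset.Ioc 0 L, r t) * ∏ t ∈ Finset.Ioc L T1, r t
          = ∏ t ∈ Finset.Ioc 0 T1, r t := Finset.prod_Ioc_consecutive _ (Nat.zero_le L) h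
      rw [hpdef, ← hsplit, mul_assoc]
      refine mul_le_of_le_one_right' ?_
      refine mul_le_one' (Finset.prod_le_one' fun t _ => prob_le_one) (by norm_num)
    · have hsplit : (∏ t ∈ Finset.Ioc 0 T1, r t) * ∏ t ∈ Finset.Ioc T1 L, r t
          = ∏ t ∈ Finset.Ioc 0 L, r t := Finset.prod_Ioc_consecutive _ (Nat.zero_le T1) h.le
      rw [hpdef, ← hsplit]
      refine mul_le_mul_right ?_ _
      have hsum2 : ∑ t ∈ Finset.Ioc T1 L, q t ≤ 1/2 := by
        have himg : ∑ t ∈ (Finset.Ioc T1 L).image (· - T1), q (t + T1)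
            = ∑ e ∈ Finset.Ioc T1 L, q (e - T1 + T1) := by
          refine Finset.sum_image ?_
          intro x hx y hy hxy
          have hx' := (Finset.mem_Ioc.mp hx).1
          have hy' := (Finset.mem_Ioc.mp hy).1
          simp only at hxy
          omega
        have heq : ∑ e ∈ Finset.Ioc T1 L, q (e - T1 + T1) = ∑ e ∈ Finset.Ioc T1 L, q e := by
          refine Finset.sum_congr rfl fun e he => ?_
          have := (Finset.mem_Ioc.mp he).1
          congr 1
          omega
        calc ∑ t ∈ Finset.Ioc T1 L, q t
            = ∑ t ∈ (Finset.Ioc T1 L).image (· - T1), q (t + T1) := by rw [himg, heq]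
          _ ≤ ∑' t, q (t + T1) := ENNReal.sum_le_tsum _
          _ ≤ 1/2 := hT1
      calc (1:ℝ≥0∞)/2 = 1 - 1/2 := (ENNReal.sub_half ENNReal.one_ne_top).symm
        _ ≤ 1 - ∑ t ∈ Finset.Ioc T1 L, q t := tsub_le_tsub_left hsum2 1
        _ ≤ ∏ t ∈ Finset.Ioc T1 L, (1 - q t) := aux_weier q _
        _ = ∏ t ∈ Finset.Ioc T1 L, r t := Finset.prod_congr rfl fun t _ => (hrq t).symm
  -- the probability of a cut point
  have hEmeas : ∀ (N : ℤ) (L : ℕ), MeasurableSet (cutSet a N L) := by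
    intro N L
    rw [cutSet_eq]
    exact Finset.measurableSet_biInter _ fun j _ => hmeas j .of_discrete
  have hEprob : ∀ (N : ℤ) (L : ℕ), p ≤ P (cutSet a N L) := by
    intro N L
    have hmb : P (cutSet a N L)
        = ∏ j ∈ Finset.Ico N (N + (L : ℤ)), P (a j ⁻¹' {v : ℕ | (v : ℤ) ≤ N + L - j}) := by
      rw [cutSet_eq]
      exact hindep.meas_biInter fun j _ => ⟨{v : ℕ | (v : ℤ) ≤ N + L - j}, .of_discrete, rfl⟩
    have hfac : ∀ j ∈ Finset.Ico N (N + (L : ℤ)),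
        P (a j ⁻¹' {v : ℕ | (v : ℤ) ≤ N + L - j}) = r (N + L - j).toNat := by
      intro j hj
      have hj' := Finset.mem_Ico.mp hj
      rw [← Measure.map_apply (hmeas j) .of_discrete, hident j,
          Measure.map_apply (hmeas 0) .of_discrete]
      rw [hrdef]
      congr 1
      ext ω
      simp only [Set.mem_preimage, Set.mem_setOf_eq]
      omega
    have hre : ∏ j ∈ Finset.Ico N (N + (L : ℤ)), r (N + L - j).toNat
        = ∏ t ∈ Finset.Ioc 0 L, r t := by
      refine Finset.prod_nbij' (fun j => (N + L - j).toNat) (fun t => N + L - t)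
        ?_ ?_ ?_ ?_ ?_
      · intro j hj
        have := Finset.mem_Ico.mp hj
        refine Finset.mem_Ioc.mpr ⟨by omega, by omega⟩
      · intro t ht
        have := Finset.mem_Ioc.mp ht
        refine Finset.mem_Ico.mpr ⟨by omega, by omega⟩
      · intro j hj
        have := Finset.mem_Ico.mp hj
        omega
      · intro t ht
        have := Finset.mem_Ioc.mp ht
        omega
      · intro j hj
        rfl
    rw [hmb, Finset.prod_congr rfl hfac, hre]
    exact hprod L
  -- probability of cofinal cut points
  have hUmeas : ∀ (N : ℤ) (K : ℕ),
      MeasurableSet (⋃ L : ℕ, ⋃ (_ : K ≤ L), cutSet a N L) := fun N K =>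
    MeasurableSet.iUnion fun L => MeasurableSet.iUnion fun _ => hEmeas N L
  have hDmeas : ∀ N : ℤ, MeasurableSet (cofin a N) := by
    intro N
    rw [cofin_eq]
    exact MeasurableSet.iInter fun K => hUmeas N K
  have hTmeas : MeasurableSet (tailSet a) := MeasurableSet.iUnion fun N => hDmeas N
  have hDprob : ∀ N : ℤ, p ≤ P (cofin a N) := by
    intro N
    rw [cofin_eq]
    have hdir : Directed (· ⊇ ·) (fun K : ℕ => ⋃ L : ℕ, ⋃ (_ : K ≤ L), cutSet a N L) := by
      intro K1 K2
      refine ⟨max K1 K2, ?_, ?_⟩ <;>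
      · intro ω hω
        simp only [Set.mem_iUnion] at hω ⊢
        obtain ⟨L, hL, h⟩ := hω
        exact ⟨L, by omega, h⟩
    rw [Directed.measure_iInter (fun K => (hUmeas N K).nullMeasurableSet) hdir
      ⟨0, measure_ne_top P _⟩]
    refine le_iInf fun K => le_trans (hEprob N K) (measure_mono ?_)
    intro ω hω
    exact Set.mem_iUnion.mpr ⟨K, Set.mem_iUnion.mpr ⟨le_rfl, hω⟩⟩
  have hTprob : p ≤ P (tailSet a) :=
    le_trans (hDprob 0) (measure_mono (Set.subset_iUnion _ 0))
  -- the tail event has probability 0 or 1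
  have hTail : P (tailSet a) = 0 ∨ P (tailSet a) = 1 := by
    refine measure_zero_or_one_of_measurableSet_limsup_atTop
      (fun n => (hmeas n).comap_le) hindep.iIndep ?_
    rw [atTop_basis.limsup_eq_iInf_iSup]
    rw [MeasurableSpace.measurableSet_iInf]
    intro N
    rw [MeasurableSpace.measurableSet_iInf]
    intro _
    have hTalt : tailSet a = ⋃ N' : ℤ, cofin a (max N N') := by
      ext ω
      simp only [tailSet, Set.mem_iUnion]
      constructor
      · rintro ⟨N', h⟩
        exact ⟨N', cofin_mono a (le_max_right N N') h⟩
      · rintro ⟨N', h⟩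
        exact ⟨max N N', h⟩
    rw [hTalt]
    refine MeasurableSet.iUnion fun N' => ?_
    rw [cofin_eq]
    refine MeasurableSet.iInter fun K => ?_
    refine MeasurableSet.iUnion fun L => ?_
    refine MeasurableSet.iUnion fun hKL => ?_
    rw [cutSet_eq]
    refine MeasurableSet.iInter fun j => ?_
    refine MeasurableSet.iInter fun hj => ?_
    have hj' := Finset.mem_Ico.mp hj
    have hjN : j ∈ Set.Ici N := Set.mem_Ici.mpr (le_trans (le_max_left N N') hj'.1)
    have hle : MeasurableSpace.comap (a j) inferInstance
        ≤ ⨆ i ∈ Set.Ici N, MeasurableSpace.comap (a i) inferInstance :=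
      le_biSup (fun i => MeasurableSpace.comap (a i) inferInstance) hjN
    exact hle _ ⟨{v : ℕ | (v : ℤ) ≤ max N N' + L - j}, .of_discrete, rfl⟩
  have hTone : P (tailSet a) = 1 := by
    rcases hTail with h | h
    · exact absurd (hTprob.trans_eq h) (by simpa using hp0.ne')
    · exact h
  -- conclusion
  rw [ae_iff]
  refine measure_mono_null ?_ ((prob_compl_eq_zero_iff hTmeas).mpr hTone)
  intro ω hω
  simp only [Set.mem_setOf_eq] at hω
  simp only [Set.mem_compl_iff]
  intro hT
  exact hω (tailSet_subset a ω (fun j => hpos j ω) hT)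
end

section
/- For every n ≥ 1, the expected number of descendants of degree n of the integer 0 equals one: E[ #{m ∈ ℤ : f^n(m) = 0} ] = 1. -/
open MeasureTheory ProbabilityTheory Filter
open scoped ENNReal

namespace DescAux

/-- Partial sum of the first `k` steps of a step vector `s : Fin n → ℕ`. -/
def psum {n : ℕ} (s : Fin n → ℕ) (k : ℕ) : ℤ :=
  ∑ j ∈ Finset.univ.filter (fun j : Fin n => (j : ℕ) < k), (s j : ℤ)

lemma psum_zero {n : ℕ} (s : Fin n → ℕ) : psum s 0 = 0 := by
  simp [psum]

lemma psum_succ {n : ℕ} (s : Fin n → ℕ) {k : ℕ} (hk : k < n) :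
    psum s (k + 1) = psum s k + s ⟨k, hk⟩ := by
  unfold psum
  rw [show (Finset.univ.filter (fun j : Fin n => (j : ℕ) < k + 1))
      = insert (⟨k, hk⟩ : Fin n) (Finset.univ.filter (fun j : Fin n => (j : ℕ) < k)) by
    ext j
    simp only [Finset.mem_insert, Finset.mem_filter, Finset.mem_univ, true_and,
      Nat.lt_succ_iff_lt_or_eq, Fin.ext_iff]
    tauto]
  rw [Finset.sum_insert (by simp)]
  ring

lemma psum_le {n : ℕ} (s : Fin n → ℕ) {k l : ℕ} (hkl : k ≤ l) : psum s k ≤ psum s l := by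
  apply Finset.sum_le_sum_of_subset_of_nonneg
  · intro j hj
    simp only [Finset.mem_filter, Finset.mem_univ, true_and] at hj ⊢
    omega
  · intro j _ _
    positivity

/-- Trajectory lemma: if the steps of `ω` along the positions determined by `s`
agree with `s`, then the iterates starting at `-(psum s n)` follow the partial sums. -/
lemma traj {Ω : Type*} (a : ℤ → Ω → ℕ) (ω : Ω) {n : ℕ} (s : Fin n → ℕ)
    (h : ∀ i : Fin n, a (-(psum s n) + psum s i) ω = s i) :
    ∀ k, k ≤ n → (genMap a ω)^[k] (-(psum s n)) = -(psum s n) + psum s k := by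
  intro k
  induction k with
  | zero => intro _; simp [psum_zero]
  | succ k ih =>
    intro hk
    have hk' : k < n := hk
    rw [Function.iterate_succ_apply', ih (le_of_lt hk')]
    have hh := h ⟨k, hk'⟩
    simp only [genMap]
    rw [show ((⟨k, hk'⟩ : Fin n) : ℕ) = k from rfl] at hh
    rw [hh, psum_succ s hk']
    ring

/-- Reverse trajectory lemma: the steps actually taken by `ω` starting from `m`
have partial sums matching the iterates. -/
lemma traj_rev {Ω : Type*} (a : ℤ → Ω → ℕ) (ω : Ω) {n : ℕ} (m : ℤ) :
    ∀ k, k ≤ n →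
      psum (fun i : Fin n => a ((genMap a ω)^[(i : ℕ)] m) ω) k = (genMap a ω)^[k] m - m := by
  intro k
  induction k with
  | zero => intro _; simp [psum_zero]
  | succ k ih =>
    intro hk
    have hk' : k < n := hk
    rw [psum_succ _ hk', ih (le_of_lt hk'), Function.iterate_succ_apply']
    simp only [genMap]
    ring

/-- The key pointwise counting identity. -/
lemma count_eq {Ω : Type*} (a : ℤ → Ω → ℕ) (ω : Ω) (n : ℕ) :
    (∑' m : ℤ, if (genMap a ω)^[n] m = 0 then (1 : ℝ≥0∞) else 0)
      = ∑' s : Fin n → ℕ,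
          if (∀ i : Fin n, a (-(psum s n) + psum s i) ω = s i) then (1 : ℝ≥0∞) else 0 := by
  set g : (Fin n → ℕ) → ℝ≥0∞ := fun s =>
    if (∀ i : Fin n, a (-(psum s n) + psum s i) ω = s i) then (1 : ℝ≥0∞) else 0 with hg
  set f : ℤ → ℝ≥0∞ := fun m => if (genMap a ω)^[n] m = 0 then (1 : ℝ≥0∞) else 0 with hf
  have hsupp_g : ∀ s : Fin n → ℕ, s ∈ Function.support g →
      ∀ i : Fin n, a (-(psum s n) + psum s i) ω = s i := by
    intro s hs
    by_contra hcon
    apply hs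
    simp only [hg, if_neg hcon]
  -- steps are recoverable: if s is in the support then s i = a (f^[i] m_s) ω
  have hrec : ∀ s : Fin n → ℕ, (∀ i : Fin n, a (-(psum s n) + psum s i) ω = s i) →
      ∀ i : Fin n, s i = a ((genMap a ω)^[(i : ℕ)] (-(psum s n))) ω := by
    intro s hs i
    rw [traj a ω s hs (i : ℕ) (le_of_lt i.isLt), hs i]
  apply tsum_eq_tsum_of_ne_zero_bij (fun s => -(psum s.1 n))
  · -- injectivity
    rintro ⟨s, hs⟩ ⟨s', hs'⟩ hm
    simp only at hm
    apply Subtype.ext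
    funext i
    show s i = s' i
    rw [hrec s (hsupp_g s hs) i, hrec s' (hsupp_g s' hs') i, hm]
  · -- support f ⊆ range
    intro m hm
    have hm0 : (genMap a ω)^[n] m = 0 := by
      by_contra hcon
      apply hm
      simp only [hf, if_neg hcon]
    set s : Fin n → ℕ := fun i => a ((genMap a ω)^[(i : ℕ)] m) ω with hs
    have hps : ∀ k, k ≤ n → psum s k = (genMap a ω)^[k] m - m := fun k hk =>
      traj_rev a ω m k hk
    have hmn : -(psum s n) = m := by
      rw [hps n le_rfl, hm0]; ring
    have hmem : s ∈ Function.support g := by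
      have : ∀ i : Fin n, a (-(psum s n) + psum s i) ω = s i := by
        intro i
        rw [hmn, hps (i : ℕ) (le_of_lt i.isLt)]
        simp only [hs]
        congr 1
        ring
      simp only [Function.mem_support, hg, if_pos this]
      exact one_ne_zero
    exact ⟨⟨s, hmem⟩, hmn⟩
  · -- f (i x) = g x
    rintro ⟨s, hs⟩
    have hcond := hsupp_g s hs
    have h0 : (genMap a ω)^[n] (-(psum s n)) = 0 := by
      rw [traj a ω s hcond n le_rfl]; ring
    simp only [hf, hg, if_pos h0, if_pos hcond]

/-- Sum of products factorizes. -/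
lemma tsum_prod_pow (p : ℕ → ℝ≥0∞) :
    ∀ n : ℕ, (∑' s : Fin n → ℕ, ∏ i : Fin n, p (s i)) = (∑' k : ℕ, p k) ^ n := by
  intro n
  induction n with
  | zero =>
    rw [pow_zero]
    rw [tsum_eq_single (fun i => i.elim0)]
    · simp
    · intro s hs
      exact absurd (funext fun i => i.elim0) hs
  | succ n ih =>
    have he := (Fin.consEquiv (fun _ : Fin (n + 1) => ℕ)).tsum_eq
      (f := fun s : Fin (n + 1) → ℕ => ∏ i : Fin (n + 1), p (s i))
    rw [← he]
    have : ∀ q : ℕ × (Fin n → ℕ),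
        (∏ i : Fin (n + 1), p ((Fin.consEquiv (fun _ : Fin (n+1) => ℕ)) q i))
          = p q.1 * ∏ i : Fin n, p (q.2 i) := by
      rintro ⟨k, t⟩
      simp only [Fin.consEquiv]
      rw [Fin.prod_univ_succ]
      simp [Fin.cons]
    calc (∑' q : ℕ × (Fin n → ℕ),
          ∏ i : Fin (n + 1), p ((Fin.consEquiv (fun _ : Fin (n+1) => ℕ)) q i))
        = ∑' q : ℕ × (Fin n → ℕ), p q.1 * ∏ i : Fin n, p (q.2 i) := by
          exact tsum_congr this
      _ = ∑' k : ℕ, ∑' t : Fin n → ℕ, p k * ∏ i : Fin n, p (t i) := ENNReal.tsum_prod'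
      _ = ∑' k : ℕ, p k * ∑' t : Fin n → ℕ, ∏ i : Fin n, p (t i) := by
          exact tsum_congr fun k => ENNReal.tsum_mul_left
      _ = (∑' k : ℕ, p k) * (∑' t : Fin n → ℕ, ∏ i : Fin n, p (t i)) :=
          ENNReal.tsum_mul_right
      _ = (∑' k : ℕ, p k) ^ (n + 1) := by rw [ih, pow_succ]; ring

end DescAux

open DescAux in
/-- For every `n ≥ 1`, the expected number of descendants of degree
`n` of the integer `0` equals one: `E[#{m ∈ ℤ : f^n(m) = 0}] = 1`. (The cardinality is
expressed as the `ℝ≥0∞`-valued sum of indicators.) -/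
theorem expected_descendants_of_degree_n_eq_one
    {Ω : Type*} [MeasurableSpace Ω] (P : Measure Ω) [IsProbabilityMeasure P]
    (a : ℤ → Ω → ℕ) (hmeas : ∀ n, Measurable (a n)) (hpos : ∀ n ω, 1 ≤ a n ω)
    (hindep : iIndepFun a P)
    (hident : ∀ n, Measure.map (a n) P = Measure.map (a 0) P) :
    ∀ n : ℕ, 1 ≤ n →
      ∫⁻ ω, (∑' m : ℤ, if (genMap a ω)^[n] m = 0 then (1 : ℝ≥0∞) else 0) ∂P = 1 := by
  intro n _
  classical
  -- the law of a single step
  set p : ℕ → ℝ≥0∞ := fun k => P (a 0 ⁻¹' {k}) with hp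
  have hp_single : ∀ (j : ℤ) (k : ℕ), P (a j ⁻¹' {k}) = p k := by
    intro j k
    have h1 : P (a j ⁻¹' {k}) = Measure.map (a j) P {k} := by
      rw [Measure.map_apply (hmeas j) (measurableSet_singleton k)]
    have h2 : P (a 0 ⁻¹' {k}) = Measure.map (a 0) P {k} := by
      rw [Measure.map_apply (hmeas 0) (measurableSet_singleton k)]
    rw [h1, hident j]
    exact h2.symm
  have hp0 : p 0 = 0 := by
    have : a 0 ⁻¹' {0} = ∅ := by
      ext ω
      simp only [Set.mem_preimage, Set.mem_singleton_iff, Set.mem_empty_iff_false, iff_false]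
      exact fun h => absurd (h ▸ hpos 0 ω) (by norm_num)
    simp [hp, this]
  have hp_sum : (∑' k : ℕ, p k) = 1 := by
    have hdisj : Pairwise (Function.onFun Disjoint fun k : ℕ => a 0 ⁻¹' {k}) := by
      intro i j hij
      exact Set.disjoint_left.2 fun ω hi hj => hij (by
        simp only [Set.mem_preimage, Set.mem_singleton_iff] at hi hj
        rw [← hi, ← hj])
    have hmeas' : ∀ k : ℕ, MeasurableSet (a 0 ⁻¹' {k}) := fun k =>
      (hmeas 0) (measurableSet_singleton k)
    have hunion : (⋃ k : ℕ, a 0 ⁻¹' {k}) = Set.univ := by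
      ext ω
      simp only [Set.mem_iUnion, Set.mem_preimage, Set.mem_singleton_iff, Set.mem_univ,
        iff_true]
      exact ⟨a 0 ω, rfl⟩
    calc (∑' k : ℕ, p k) = P (⋃ k : ℕ, a 0 ⁻¹' {k}) := (measure_iUnion hdisj hmeas').symm
      _ = 1 := by rw [hunion, measure_univ]
  -- rewrite the integrand using the counting identity
  have hstep1 : ∫⁻ ω, (∑' m : ℤ, if (genMap a ω)^[n] m = 0 then (1 : ℝ≥0∞) else 0) ∂P
      = ∫⁻ ω, (∑' s : Fin n → ℕ,
          if (∀ i : Fin n, a (-(psum s n) + psum s i) ω = s i) then (1 : ℝ≥0∞) else 0) ∂P := by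
    apply lintegral_congr
    intro ω
    exact count_eq a ω n
  rw [hstep1]
  -- measurability of the per-path indicator
  have hmeasE : ∀ s : Fin n → ℕ, MeasurableSet
      {ω : Ω | ∀ i : Fin n, a (-(psum s n) + psum s i) ω = s i} := by
    intro s
    have : {ω : Ω | ∀ i : Fin n, a (-(psum s n) + psum s i) ω = s i}
        = ⋂ i : Fin n, a (-(psum s n) + psum s i) ⁻¹' {s i} := by
      ext ω; simp [Set.mem_iInter]
    rw [this]
    exact MeasurableSet.iInter fun i => (hmeas _) (measurableSet_singleton _)
  have hstep2 : ∫⁻ ω, (∑' s : Fin n → ℕ,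
        if (∀ i : Fin n, a (-(psum s n) + psum s i) ω = s i) then (1 : ℝ≥0∞) else 0) ∂P
      = ∑' s : Fin n → ℕ,
          P {ω : Ω | ∀ i : Fin n, a (-(psum s n) + psum s i) ω = s i} := by
    rw [lintegral_tsum (fun s => ?_)]
    · apply tsum_congr
      intro s
      have heq : ∫⁻ ω, (if (∀ i : Fin n, a (-(psum s n) + psum s i) ω = s i)
            then (1 : ℝ≥0∞) else 0) ∂P
          = ∫⁻ ω, Set.indicator {ω : Ω | ∀ i : Fin n, a (-(psum s n) + psum s i) ω = s i}
              (fun _ => (1 : ℝ≥0∞)) ω ∂P :=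
        lintegral_congr fun ω => by simp [Set.indicator_apply, Set.mem_setOf_eq]
      rw [heq]
      exact lintegral_indicator_one (hmeasE s)
    · exact (Measurable.ite (hmeasE s) measurable_const measurable_const).aemeasurable
  rw [hstep2]
  -- evaluate the probability of each path event
  have hPE : ∀ s : Fin n → ℕ,
      P {ω : Ω | ∀ i : Fin n, a (-(psum s n) + psum s i) ω = s i}
        = ∏ i : Fin n, p (s i) := by
    intro s
    by_cases hall : ∀ i : Fin n, 1 ≤ s i
    · -- positions are injective
      have hposfun : Function.Injective (fun i : Fin n => -(psum s n) + psum s (i : ℕ)) := by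
        have hstrict : ∀ i j : Fin n, (i : ℕ) < (j : ℕ) → psum s (i : ℕ) < psum s (j : ℕ) := by
          intro i j hij
          have h1 : psum s ((i : ℕ) + 1) = psum s (i : ℕ) + s i := by
            rw [psum_succ s i.isLt]
          have h2 : psum s ((i : ℕ) + 1) ≤ psum s (j : ℕ) := psum_le s hij
          have h3 : (1 : ℤ) ≤ (s i : ℤ) := by exact_mod_cast hall i
          omega
        intro i j hij
        simp only at hij
        by_contra hne
        rcases Nat.lt_or_ge (i : ℕ) (j : ℕ) with h | h
        · exact absurd (by omega : psum s (i:ℕ) = psum s (j:ℕ)) (hstrict i j h).ne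
        · have h' : (j : ℕ) < (i : ℕ) := by
            rcases Nat.lt_or_ge (j : ℕ) (i : ℕ) with h' | h'
            · exact h'
            · exact absurd (Fin.ext (le_antisymm h' h)) hne
          exact absurd (by omega : psum s (j:ℕ) = psum s (i:ℕ)) (hstrict j i h').ne
      -- apply independence
      set pos : Fin n → ℤ := fun i => -(psum s n) + psum s (i : ℕ) with hposdef
      set S : Finset ℤ := Finset.image pos Finset.univ with hS
      set sets : ℤ → Set ℕ := fun z =>
        if h : ∃ i : Fin n, pos i = z then {s h.choose} else Set.univ with hsets
      have hsets_pos : ∀ i : Fin n, sets (pos i) = {s i} := by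
        intro i
        have hex : ∃ j : Fin n, pos j = pos i := ⟨i, rfl⟩
        simp only [hsets, dif_pos hex]
        congr 1
        exact congrArg s (hposfun hex.choose_spec)
      have hindep' := hindep.measure_inter_preimage_eq_mul S
        (sets := sets) (fun i _ => by
          by_cases h : ∃ j : Fin n, pos j = i
          · simp only [hsets, dif_pos h]; exact measurableSet_singleton _
          · simp only [hsets, dif_neg h]; exact MeasurableSet.univ)
      have hEset : {ω : Ω | ∀ i : Fin n, a (-(psum s n) + psum s i) ω = s i}
          = ⋂ z ∈ S, a z ⁻¹' sets z := by
        ext ω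
        simp only [Set.mem_setOf_eq, Set.mem_iInter, hS, Finset.mem_image, Finset.mem_univ,
          true_and]
        constructor
        · rintro h z ⟨i, rfl⟩
          rw [hsets_pos i]
          exact h i
        · intro h i
          have := h (pos i) ⟨i, rfl⟩
          rw [hsets_pos i] at this
          exact this
      rw [hEset, hindep']
      rw [hS, Finset.prod_image (fun i _ j _ h => hposfun h)]
      apply Finset.prod_congr rfl
      intro i _
      rw [hsets_pos i, hp_single]
    · -- some step is zero: both sides vanish
      push_neg at hall
      obtain ⟨i, hi⟩ := hall
      have hsi : s i = 0 := by omega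
      have hempty : {ω : Ω | ∀ i : Fin n, a (-(psum s n) + psum s i) ω = s i} = ∅ := by
        ext ω
        simp only [Set.mem_setOf_eq, Set.mem_empty_iff_false, iff_false]
        intro h
        have := h i
        rw [hsi] at this
        exact absurd (this ▸ hpos _ ω) (by norm_num)
      rw [hempty, measure_empty]
      symm
      apply Finset.prod_eq_zero (Finset.mem_univ i)
      rw [hsi, hp0]
  calc (∑' s : Fin n → ℕ,
        P {ω : Ω | ∀ i : Fin n, a (-(psum s n) + psum s i) ω = s i})
      = ∑' s : Fin n → ℕ, ∏ i : Fin n, p (s i) := tsum_congr hPE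
    _ = (∑' k : ℕ, p k) ^ n := tsum_prod_pow p n
    _ = 1 := by rw [hp_sum, one_pow]
end

section
/- Let a be a random variable taking values in the positive integers {1,2,3,…} with E[a] < ∞. Then ∏_{i=1}^∞ ℙ[a ≤ i] ≤ 1 / E[a]. -/
open MeasureTheory Filter
open scoped ENNReal

/-- Let `a` be a random variable taking values in the positive
integers with `E[a] < ∞`. Then `∏_{i=1}^∞ ℙ[a ≤ i] ≤ 1 / E[a]`, where the infinite
product is the limit of the nonincreasing partial products. -/
theorem infinite_product_le_inv_mean
    {Ω : Type*} [MeasurableSpace Ω] (P : Measure Ω) [IsProbabilityMeasure P]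
    (a : Ω → ℕ) (hmeas : Measurable a) (hpos : ∀ ω, 1 ≤ a ω)
    (hmean : ∫⁻ ω, (a ω : ℝ≥0∞) ∂P < ⊤)
    (L : ℝ≥0∞)
    (hL : Tendsto (fun I : ℕ => ∏ i ∈ Finset.Icc 1 I, P {ω | a ω ≤ i}) atTop (nhds L)) :
    L ≤ (∫⁻ ω, (a ω : ℝ≥0∞) ∂P)⁻¹ := by
  set E := ∫⁻ ω, (a ω : ℝ≥0∞) ∂P with hEdef
  have hmG : ∀ n : ℕ, MeasurableSet {ω | n < a ω} := fun n => hmeas measurableSet_Ioi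
  have hmP : ∀ i : ℕ, MeasurableSet {ω | a ω ≤ i} := fun i => hmeas measurableSet_Iic
  -- layer cake: E = ∑' n, P {n < a}
  have key : E = ∑' n : ℕ, P {ω | n < a ω} := by
    have h1 : ∀ ω, (a ω : ℝ≥0∞) =
        ∑' n : ℕ, Set.indicator {ω | n < a ω} (fun _ => (1:ℝ≥0∞)) ω := by
      intro ω
      simp only [Set.indicator_apply, Set.mem_setOf_eq]
      rw [tsum_eq_sum (s := Finset.range (a ω))
        (f := fun n => if n < a ω then (1:ℝ≥0∞) else 0)
        (fun n hn => if_neg (Finset.mem_range.not.mp hn))]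
      rw [Finset.sum_congr rfl (fun n hn => if_pos (Finset.mem_range.mp hn)),
        Finset.sum_const, nsmul_eq_mul, mul_one, Finset.card_range]
    calc E = ∫⁻ ω, ∑' n : ℕ, Set.indicator {ω | n < a ω} (fun _ => (1:ℝ≥0∞)) ω ∂P :=
          lintegral_congr h1
      _ = ∑' n : ℕ, ∫⁻ ω, Set.indicator {ω | n < a ω} (fun _ => (1:ℝ≥0∞)) ω ∂P :=
          lintegral_tsum (fun n => ((measurable_const.indicator (hmG n)).aemeasurable))
      _ = ∑' n : ℕ, P {ω | n < a ω} := by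
          refine tsum_congr fun n => ?_
          exact lintegral_indicator_one (hmG n)
  have hEne : E ≠ ⊤ := hmean.ne
  have hE1 : 1 ≤ E := by
    rw [hEdef]
    calc (1:ℝ≥0∞) = ∫⁻ _, 1 ∂P := by simp
      _ ≤ E := lintegral_mono fun ω => by show (1:ℝ≥0∞) ≤ (a ω : ℝ≥0∞); exact_mod_cast hpos ω
  set Er := E.toReal with hErdef
  have hEr1 : 1 ≤ Er := by
    have := ENNReal.toReal_mono hEne hE1
    simpa using this
  set p : ℕ → ℝ := fun i => (P {ω | a ω ≤ i}).toReal with hp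
  set g : ℕ → ℝ := fun n => (P {ω | n < a ω}).toReal with hg
  have hfinP : ∀ i, P {ω | a ω ≤ i} ≠ ⊤ := fun i => (measure_lt_top P _).ne
  have hfinG : ∀ n, P {ω | n < a ω} ≠ ⊤ := fun n => (measure_lt_top P _).ne
  have hpg : ∀ i, p i + g i = 1 := by
    intro i
    have hc : {ω | a ω ≤ i}ᶜ = {ω | i < a ω} := by ext ω; simp [not_le]
    have h := measure_add_measure_compl (μ := P) (hmP i)
    rw [hc, measure_univ] at h
    have h2 := congrArg ENNReal.toReal h
    rwa [ENNReal.toReal_add (hfinP i) (hfinG i), ENNReal.toReal_one] at h2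
  have hp0 : ∀ i, 0 ≤ p i := fun i => ENNReal.toReal_nonneg
  have hErsum : Er = ∑' n, g n := by
    rw [hErdef, key, ENNReal.tsum_toReal_eq (fun n => hfinG n)]
  have hgsummable : Summable g := by
    have : (∑' n : ℕ, P {ω | n < a ω}) ≠ ⊤ := key ▸ hEne
    exact ENNReal.summable_toReal this
  have hg0 : g 0 = 1 := by
    have huniv : {ω | 0 < a ω} = Set.univ := by
      ext ω; simpa using (show 0 < a ω from hpos ω)
    simp [hg, huniv]
  have hS : ∑' n, g (n + 1) = Er - 1 := by
    have := Summable.tsum_eq_zero_add hgsummable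
    rw [hg0, ← hErsum] at this
    linarith
  have hsum_tendsto : Tendsto (fun I => ∑ i ∈ Finset.Icc 1 I, g i) atTop (nhds (Er - 1)) := by
    have h1 : Summable (fun n => g (n + 1)) := (summable_nat_add_iff 1).mpr hgsummable
    have h2 := h1.hasSum.tendsto_sum_nat
    rw [hS] at h2
    refine h2.congr fun I => ?_
    rw [← Finset.Ico_add_one_right_eq_Icc, Finset.sum_Ico_eq_sum_range]
    simp [add_comm]
  have hLle : ∀ I, L ≤ ∏ i ∈ Finset.Icc 1 I, P {ω | a ω ≤ i} := by
    intro I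
    refine le_of_tendsto hL ?_
    filter_upwards [eventually_ge_atTop I] with n hn
    have hsub : Finset.Icc 1 I ⊆ Finset.Icc 1 n := Finset.Icc_subset_Icc_right hn
    rw [← Finset.prod_sdiff hsub]
    exact mul_le_of_le_one_left' (Finset.prod_le_one' fun i _ => prob_le_one)
  have hLne : L ≠ ⊤ := by
    have := (hLle 0).trans_lt (by simp : (∏ i ∈ Finset.Icc 1 0, P {ω | a ω ≤ i}) < ⊤)
    exact this.ne
  have hLreal : ∀ I, L.toReal ≤ ∏ i ∈ Finset.Icc 1 I, p i := by
    intro I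
    rw [hp, ← ENNReal.toReal_prod]
    exact ENNReal.toReal_mono (ENNReal.prod_ne_top fun i _ => hfinP i) (hLle I)
  have hexp : ∀ I, (∏ i ∈ Finset.Icc 1 I, p i) ≤ Real.exp (-(∑ i ∈ Finset.Icc 1 I, g i)) := by
    intro I
    calc (∏ i ∈ Finset.Icc 1 I, p i) ≤ ∏ i ∈ Finset.Icc 1 I, Real.exp (p i - 1) := by
          refine Finset.prod_le_prod (fun i _ => hp0 i) (fun i _ => ?_)
          have := Real.add_one_le_exp (p i - 1); linarith
      _ = Real.exp (∑ i ∈ Finset.Icc 1 I, (p i - 1)) := (Real.exp_sum _ _).symm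
      _ = Real.exp (-(∑ i ∈ Finset.Icc 1 I, g i)) := by
          rw [← Finset.sum_neg_distrib]
          congr 1
          exact Finset.sum_congr rfl fun i _ => by have := hpg i; linarith
  have hfinal : L.toReal ≤ Real.exp (-(Er - 1)) := by
    have ht : Tendsto (fun I => Real.exp (-(∑ i ∈ Finset.Icc 1 I, g i))) atTop
        (nhds (Real.exp (-(Er - 1)))) :=
      (Real.continuous_exp.continuousAt.tendsto).comp hsum_tendsto.neg
    exact ge_of_tendsto' ht fun I => (hLreal I).trans (hexp I)
  have hErpos : (0:ℝ) < Er := lt_of_lt_of_le one_pos hEr1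
  have hexp_le : Real.exp (-(Er - 1)) ≤ Er⁻¹ := by
    rw [Real.exp_neg]
    have h := Real.add_one_le_exp (Er - 1)
    have : Er ≤ Real.exp (Er - 1) := by linarith
    exact inv_anti₀ hErpos this
  have hEinvne : E⁻¹ ≠ ⊤ := by
    rw [ENNReal.inv_ne_top]
    intro h
    rw [h] at hE1
    simp at hE1
  refine (ENNReal.toReal_le_toReal hLne hEinvne).mp ?_
  rw [ENNReal.toReal_inv]
  exact hfinal.trans hexp_le
end

section
/- Assume ℙ[a_0 = 1] ∈ (0,1) and E[a_0] < ∞. Then for every n ≥ 1, E[ d_n(0) | 0 is successful ] > 1 and E[ d_n(0) | 0 is ephemeral ] < 1, where d_n(0) = #{m ∈ ℤ : f^n(m) = 0}. -/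
open MeasureTheory ProbabilityTheory Filter
open scoped ENNReal ProbabilityTheory

/-- The set of descendants (of all degrees) of `n`: `D(n) = {m : f^j(m) = n, some j ≥ 0}`. -/
def descendants {Ω : Type*} (a : ℤ → Ω → ℕ) (ω : Ω) (n : ℤ) : Set ℤ :=
  {m : ℤ | ∃ j : ℕ, (genMap a ω)^[j] m = n}

namespace SuccAux

/-- Relative hitting predicate: `Hits x j` says the walk started `j` steps to the left of the
origin reaches the origin, where `x i` is the step size at position `-(1+i)`. -/
def Hits (x : ℕ → ℕ) : ℕ → Prop
  | 0 => True
  | (j+1) => ∃ c : ℕ, x j = c + 1 ∧ c ≤ j ∧ Hits x (j - c)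
  termination_by j => j
  decreasing_by exact Nat.lt_succ_of_le (Nat.sub_le j c)

lemma hits_zero (x : ℕ → ℕ) : Hits x 0 := by rw [Hits]; trivial

lemma hits_succ {x : ℕ → ℕ} {j : ℕ} :
    Hits x (j+1) ↔ ∃ c : ℕ, x j = c + 1 ∧ c ≤ j ∧ Hits x (j - c) := by
  rw [Hits]

lemma measurableSet_hits (j : ℕ) : MeasurableSet {x : ℕ → ℕ | Hits x j} := by
  induction j using Nat.strong_induction_on with
  | _ j ih =>
    match j with
    | 0 =>
      have : {x : ℕ → ℕ | Hits x 0} = Set.univ := by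
        ext x; simp [hits_zero]
      rw [this]; exact MeasurableSet.univ
    | (j+1) =>
      have : {x : ℕ → ℕ | Hits x (j+1)} =
          ⋃ c ∈ Finset.range (j+1),
            ({x : ℕ → ℕ | x j = c + 1} ∩ {x : ℕ → ℕ | Hits x (j - c)}) := by
        ext x
        simp only [Set.mem_setOf_eq, Set.mem_iUnion, Set.mem_inter_iff, Finset.mem_range,
          hits_succ]
        constructor
        · rintro ⟨c, h1, h2, h3⟩; exact ⟨c, by omega, h1, h3⟩
        · rintro ⟨c, h1, h2, h3⟩; exact ⟨c, h2, by omega, h3⟩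
      rw [this]
      refine MeasurableSet.biUnion (Finset.range (j+1)).countable_toSet (fun c _ => ?_)
      exact ((measurable_pi_apply j) (measurableSet_singleton (c+1))).inter
        (ih (j - c) (Nat.lt_succ_of_le (Nat.sub_le j c)))

/-- Set of step configurations for which the origin is hit from infinitely many starting points. -/
def EInf : Set (ℕ → ℕ) := {x | {j : ℕ | Hits x (j+1)}.Infinite}

lemma measurableSet_EInf : MeasurableSet EInf := by
  have : EInf = ⋂ N : ℕ, ⋃ j : ℕ, ⋃ _ : N ≤ j, {x : ℕ → ℕ | Hits x (j+1)} := by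
    ext x
    simp only [EInf, Set.mem_setOf_eq, Set.mem_iInter, Set.mem_iUnion]
    constructor
    · intro h N
      by_contra hc
      push_neg at hc
      exact h (Set.Finite.subset (Set.finite_Iio N)
        (fun j hj => lt_of_not_ge (fun hle => hc j hle hj)))
    · intro h
      apply Set.infinite_of_forall_exists_gt
      intro N
      obtain ⟨j, hN, hj⟩ := h (N+1)
      exact ⟨j, hj, by omega⟩
  rw [this]
  exact MeasurableSet.iInter fun N => MeasurableSet.iUnion fun j =>
    MeasurableSet.iUnion fun _ => measurableSet_hits (j+1)

section Walk

variable {Ω : Type*} (a : ℤ → Ω → ℕ) (ω : Ω) (hpos : ∀ n ω, 1 ≤ a n ω)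
include hpos

lemma le_iterate : ∀ (r : ℕ) (x : ℤ), x + r ≤ (genMap a ω)^[r] x := by
  intro r
  induction r with
  | zero => intro x; simp
  | succ r ih =>
    intro x
    rw [Function.iterate_succ_apply]
    have h1 : (1:ℤ) ≤ (a x ω : ℤ) := by exact_mod_cast hpos x ω
    have h2 := ih (genMap a ω x)
    have h3 : genMap a ω x = x + (a x ω : ℤ) := rfl
    push_cast
    push_cast at h2
    linarith [h2, h1]

/-- Correspondence between the abstract `Hits` predicate and the walk reaching `m`. -/
lemma hits_iff (m : ℤ) :
    ∀ (j : ℕ), (∃ r : ℕ, (genMap a ω)^[r] (m - (j:ℤ)) = m) ↔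
      Hits (fun i : ℕ => a (m - 1 - (i:ℤ)) ω) j := by
  intro j
  induction j using Nat.strong_induction_on with
  | _ j ih =>
    match j with
    | 0 => exact ⟨fun _ => hits_zero _, fun _ => ⟨0, by simp⟩⟩
    | (j+1) =>
      constructor
      · rintro ⟨r, hr⟩
        have hr0 : r ≠ 0 := by
          intro h; subst h
          simp only [Function.iterate_zero, id_eq] at hr
          omega
        obtain ⟨r', rfl⟩ := Nat.exists_eq_succ_of_ne_zero hr0
        rw [Function.iterate_succ_apply] at hr
        have hgen : genMap a ω (m - ((j+1 : ℕ):ℤ)) =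
            m - ((j+1 : ℕ):ℤ) + (a (m - ((j+1 : ℕ):ℤ)) ω : ℤ) := rfl
        set c' := a (m - ((j+1 : ℕ):ℤ)) ω with hc'def
        have hc1 : 1 ≤ c' := hpos _ _
        have hle : (c' : ℤ) ≤ (j:ℤ) + 1 := by
          by_contra hgt
          push_neg at hgt
          have h2 := le_iterate a ω hpos r' (genMap a ω (m - ((j+1 : ℕ):ℤ)))
          rw [hr] at h2
          rw [hgen] at h2
          push_cast at h2 hgt
          omega
        have hlen : c' ≤ j + 1 := by exact_mod_cast hle
        refine hits_succ.2 ⟨c' - 1, ?_, by omega, ?_⟩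
        · show a (m - 1 - (j:ℤ)) ω = c' - 1 + 1
          have : m - 1 - (j:ℤ) = m - ((j+1 : ℕ):ℤ) := by push_cast; ring
          rw [this, ← hc'def]; omega
        · rcases Nat.eq_or_lt_of_le hlen with heq | hlt
          · have : j - (c' - 1) = 0 := by omega
            rw [this]; exact hits_zero _
          · have hcj : c' ≤ j := by omega
            have harg : genMap a ω (m - ((j+1 : ℕ):ℤ)) = m - ((j - (c' - 1) : ℕ):ℤ) := by
              rw [hgen]; push_cast; omega
            rw [harg] at hr
            have hidx : j - (c' - 1) < j + 1 := by omega
            exact (ih (j - (c' - 1)) hidx).1 ⟨r', hr⟩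
      · intro h
        obtain ⟨c, hxj, hcj, hH⟩ := hits_succ.1 h
        obtain ⟨r', hr'⟩ := (ih (j - c) (by omega)).2 hH
        refine ⟨r' + 1, ?_⟩
        rw [Function.iterate_succ_apply]
        have hpt : m - ((j+1 : ℕ):ℤ) = m - 1 - (j:ℤ) := by push_cast; ring
        have hstep : genMap a ω (m - ((j+1 : ℕ):ℤ)) = m - ((j - c : ℕ):ℤ) := by
          show m - ((j+1 : ℕ):ℤ) + (a (m - ((j+1 : ℕ):ℤ)) ω : ℤ) = m - ((j - c : ℕ):ℤ)
          rw [hpt, hxj]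
          push_cast
          omega
        rw [hstep]
        exact hr'

/-- The descendants of `m` form an infinite set iff the abstract configuration lies in `EInf`. -/
lemma desc_infinite_iff (m : ℤ) :
    (descendants a ω m).Infinite ↔ (fun i : ℕ => a (m - 1 - (i:ℤ)) ω) ∈ EInf := by
  constructor
  · intro h
    by_contra hJ
    rw [EInf, Set.mem_setOf_eq, Set.not_infinite] at hJ
    apply h
    have hsub : descendants a ω m ⊆
        insert m ((fun j : ℕ => m - ((j:ℤ)+1)) '' {j : ℕ | Hits (fun i : ℕ => a (m - 1 - (i:ℤ)) ω) (j+1)}) := by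
      rintro d ⟨r, hr⟩
      have hd : d ≤ m := by
        have := le_iterate a ω hpos r d
        rw [hr] at this
        omega
      rcases eq_or_lt_of_le hd with rfl | hlt
      · exact Set.mem_insert _ _
      · right
        obtain ⟨j, hj⟩ : ∃ j : ℕ, d = m - ((j:ℤ)+1) := ⟨(m - d - 1).toNat, by omega⟩
        refine ⟨j, ?_, hj.symm⟩
        refine (hits_iff a ω hpos m (j+1)).1 ⟨r, ?_⟩
        have : m - ((j+1 : ℕ):ℤ) = d := by rw [hj]; push_cast; ring
        rw [this]; exact hr
    exact Set.Finite.subset ((hJ.image _).insert m) hsub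
  · intro h
    have himg : ((fun j : ℕ => m - ((j:ℤ)+1)) ''
        {j : ℕ | Hits (fun i : ℕ => a (m - 1 - (i:ℤ)) ω) (j+1)}).Infinite := by
      apply Set.Infinite.image _ h
      intro j₁ _ j₂ _ he
      simp only at he
      omega
    refine himg.mono ?_
    rintro d ⟨j, hj, rfl⟩
    obtain ⟨r, hr⟩ := (hits_iff a ω hpos m (j+1)).2 hj
    refine ⟨r, ?_⟩
    show (genMap a ω)^[r] (m - ((j:ℤ)+1)) = m
    have : m - ((j:ℤ)+1) = m - ((j+1 : ℕ):ℤ) := by push_cast; ring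
    rw [this]; exact hr



end Walk

/-- Sites of the forcing event: the pipeline `-1,…,-n`, then `m₂ = 1-k-n`, `m₂-1`, and all
sites below. -/
def fsite (n k : ℕ) : ℕ → ℤ := fun j => if j < n then -(1+(j:ℤ)) else 1 - (k:ℤ) - (j:ℤ)

/-- Required step values at the sites of the forcing event. -/
def ftset (n k : ℕ) : ℕ → Set ℕ := fun j =>
  if j < n then {1} else if j < n + 2 then {k} else {c | c ≤ j - n - 1}

lemma fsite_inj {n k : ℕ} (hk : 2 ≤ k) : Function.Injective (fsite n k) := by
  intro j₁ j₂ h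
  unfold fsite at h
  split_ifs at h <;> omega

section FEvent

variable {Ω : Type*} (a : ℤ → Ω → ℕ) (ω : Ω) {n k : ℕ}
  (hpos : ∀ n ω, 1 ≤ a n ω) (hn : 1 ≤ n) (hk : 2 ≤ k)
  (hω : ∀ j : ℕ, a (fsite n k j) ω ∈ ftset n k j)

include hpos hn hk hω

lemma fev_ones : ∀ t : ℤ, -(n:ℤ) ≤ t → t ≤ -1 → a t ω = 1 := by
  intro t h1 h2
  obtain ⟨j, hjn, rfl⟩ : ∃ j : ℕ, j < n ∧ t = -(1+(j:ℤ)) :=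
    ⟨(-t-1).toNat, by omega, by omega⟩
  have h := hω j
  unfold fsite ftset at h
  rw [if_pos hjn, if_pos hjn] at h
  exact h

lemma fev_k2 : a (1 - (k:ℤ) - (n:ℤ)) ω = k := by
  have h := hω n
  unfold fsite ftset at h
  rw [if_neg (lt_irrefl n), if_neg (lt_irrefl n), if_pos (by omega : n < n + 2)] at h
  exact h

lemma fev_k3 : a (1 - (k:ℤ) - (n:ℤ) - 1) ω = k := by
  have h := hω (n+1)
  unfold fsite ftset at h
  rw [if_neg (by omega : ¬ n+1 < n), if_neg (by omega : ¬ n+1 < n),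
    if_pos (by omega : n+1 < n + 2)] at h
  have he : 1 - (k:ℤ) - ((n+1:ℕ):ℤ) = 1 - (k:ℤ) - (n:ℤ) - 1 := by push_cast; ring
  rwa [he] at h

lemma fev_bnd : ∀ i : ℕ, a (1 - (k:ℤ) - (n:ℤ) - 2 - (i:ℤ)) ω ≤ i + 1 := by
  intro i
  have h := hω (n+2+i)
  unfold fsite ftset at h
  rw [if_neg (by omega : ¬ n+2+i < n), if_neg (by omega : ¬ n+2+i < n),
    if_neg (by omega : ¬ n+2+i < n+2)] at h
  have he : 1 - (k:ℤ) - ((n+2+i:ℕ):ℤ) = 1 - (k:ℤ) - (n:ℤ) - 2 - (i:ℤ) := by push_cast; ring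
  rw [he] at h
  simp only [Set.mem_setOf_eq] at h
  omega

lemma fev_chain : ∀ t : ℕ, t ≤ n → (genMap a ω)^[t] (-(t:ℤ)) = 0 := by
  intro t
  induction t with
  | zero => intro _; simp
  | succ t ih =>
    intro ht
    rw [Function.iterate_succ_apply]
    have hval : a (-(((t+1):ℕ):ℤ)) ω = 1 := by
      refine fev_ones a ω hpos hn hk hω (-(((t+1):ℕ):ℤ)) (by push_cast; omega) (by push_cast; omega)
    have hstep : genMap a ω (-(((t+1):ℕ):ℤ)) = -(t:ℤ) := by
      show -(((t+1):ℕ):ℤ) + (a (-(((t+1):ℕ):ℤ)) ω : ℤ) = -(t:ℤ)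
      rw [hval]
      push_cast; ring
    rw [hstep]
    exact ih (by omega)

lemma fev_F1 : (genMap a ω)^[n] (1 - (k:ℤ) - (n:ℤ)) = 0 := by
  obtain ⟨n', rfl⟩ : ∃ n', n = n' + 1 := ⟨n-1, by omega⟩
  rw [Function.iterate_succ_apply]
  have hv := fev_k2 a ω hpos hn hk hω
  have hstep : genMap a ω (1 - (k:ℤ) - ((n'+1:ℕ):ℤ)) = -((n':ℕ):ℤ) := by
    show 1 - (k:ℤ) - ((n'+1:ℕ):ℤ) + (a (1 - (k:ℤ) - ((n'+1:ℕ):ℤ)) ω : ℤ) = -((n':ℕ):ℤ)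
    rw [hv]; push_cast; ring
  rw [hstep]
  exact fev_chain a ω hpos hn hk hω n' (by omega)

lemma fev_reach : ∀ i : ℕ, ∃ r : ℕ,
    (genMap a ω)^[r] (1 - (k:ℤ) - (n:ℤ) - 1 - (i:ℤ)) = 1 - (k:ℤ) - (n:ℤ) - 1 := by
  intro i
  induction i using Nat.strong_induction_on with
  | _ i ih =>
    match i with
    | 0 => exact ⟨0, by simp⟩
    | (i'+1) =>
      have hc1 : 1 ≤ a (1 - (k:ℤ) - (n:ℤ) - 1 - ((i'+1 : ℕ):ℤ)) ω := hpos _ _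
      have hcb : a (1 - (k:ℤ) - (n:ℤ) - 1 - ((i'+1 : ℕ):ℤ)) ω ≤ i' + 1 := by
        have h := fev_bnd a ω hpos hn hk hω i'
        have he : 1 - (k:ℤ) - (n:ℤ) - 2 - (i':ℤ) = 1 - (k:ℤ) - (n:ℤ) - 1 - ((i'+1 : ℕ):ℤ) := by
          push_cast; ring
        rwa [he] at h
      obtain ⟨r, hr⟩ := ih (i' + 1 - a (1 - (k:ℤ) - (n:ℤ) - 1 - ((i'+1 : ℕ):ℤ)) ω) (by omega)
      refine ⟨r + 1, ?_⟩
      rw [Function.iterate_succ_apply]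
      have hstep : genMap a ω (1 - (k:ℤ) - (n:ℤ) - 1 - ((i'+1 : ℕ):ℤ))
          = 1 - (k:ℤ) - (n:ℤ) - 1
            - ((i' + 1 - a (1 - (k:ℤ) - (n:ℤ) - 1 - ((i'+1 : ℕ):ℤ)) ω : ℕ):ℤ) := by
        show 1 - (k:ℤ) - (n:ℤ) - 1 - ((i'+1 : ℕ):ℤ)
            + (a (1 - (k:ℤ) - (n:ℤ) - 1 - ((i'+1 : ℕ):ℤ)) ω : ℤ) = _
        omega
      rw [hstep]
      exact hr

lemma fev_F2 : (descendants a ω 0).Infinite := by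
  apply Set.infinite_of_injective_forall_mem
    (f := fun i : ℕ => 1 - (k:ℤ) - (n:ℤ) - 1 - (i:ℤ))
  · intro i j h
    simp only at h
    omega
  · intro i
    obtain ⟨r, hr⟩ := fev_reach a ω hpos hn hk hω i
    have hstep : genMap a ω (1 - (k:ℤ) - (n:ℤ) - 1) = -(n:ℤ) := by
      show 1 - (k:ℤ) - (n:ℤ) - 1 + (a (1 - (k:ℤ) - (n:ℤ) - 1) ω : ℤ) = -(n:ℤ)
      rw [fev_k3 a ω hpos hn hk hω]
      push_cast; ring
    show ∃ j : ℕ, (genMap a ω)^[j] (1 - (k:ℤ) - (n:ℤ) - 1 - (i:ℤ)) = 0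
    refine ⟨(n + 1) + r, ?_⟩
    rw [Function.iterate_add_apply, hr, Function.iterate_succ_apply, hstep]
    exact fev_chain a ω hpos hn hk hω n le_rfl

lemma fev_key : ∀ i : ℕ, ∀ r : ℕ,
    (genMap a ω)^[r] (1 - (k:ℤ) - (n:ℤ) - 1 - (i:ℤ)) ≠ 1 - (k:ℤ) - (n:ℤ) := by
  intro i
  induction i using Nat.strong_induction_on with
  | _ i ih =>
    intro r
    match r with
    | 0 =>
      simp only [Function.iterate_zero, id_eq]
      omega
    | (r'+1) =>
      rw [Function.iterate_succ_apply]
      match i with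
      | 0 =>
        have hstep : genMap a ω (1 - (k:ℤ) - (n:ℤ) - 1 - ((0:ℕ):ℤ)) = -(n:ℤ) := by
          show 1 - (k:ℤ) - (n:ℤ) - 1 - ((0:ℕ):ℤ)
              + (a (1 - (k:ℤ) - (n:ℤ) - 1 - ((0:ℕ):ℤ)) ω : ℤ) = -(n:ℤ)
          have h3 := fev_k3 a ω hpos hn hk hω
          have he : 1 - (k:ℤ) - (n:ℤ) - 1 - ((0:ℕ):ℤ) = 1 - (k:ℤ) - (n:ℤ) - 1 := by
            push_cast; ring
          rw [he, h3]
          push_cast; ring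
        rw [hstep]
        intro hcon
        have hge := le_iterate a ω hpos r' (-(n:ℤ))
        rw [hcon] at hge
        omega
      | (i'+1) =>
        have hc1 : 1 ≤ a (1 - (k:ℤ) - (n:ℤ) - 1 - ((i'+1 : ℕ):ℤ)) ω := hpos _ _
        have hcb : a (1 - (k:ℤ) - (n:ℤ) - 1 - ((i'+1 : ℕ):ℤ)) ω ≤ i' + 1 := by
          have h := fev_bnd a ω hpos hn hk hω i'
          have he : 1 - (k:ℤ) - (n:ℤ) - 2 - (i':ℤ) = 1 - (k:ℤ) - (n:ℤ) - 1 - ((i'+1 : ℕ):ℤ) := by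
            push_cast; ring
          rwa [he] at h
        have hstep : genMap a ω (1 - (k:ℤ) - (n:ℤ) - 1 - ((i'+1 : ℕ):ℤ))
            = 1 - (k:ℤ) - (n:ℤ) - 1
              - ((i' + 1 - a (1 - (k:ℤ) - (n:ℤ) - 1 - ((i'+1 : ℕ):ℤ)) ω : ℕ):ℤ) := by
          show 1 - (k:ℤ) - (n:ℤ) - 1 - ((i'+1 : ℕ):ℤ)
              + (a (1 - (k:ℤ) - (n:ℤ) - 1 - ((i'+1 : ℕ):ℤ)) ω : ℤ) = _
          omega
        rw [hstep]
        exact ih (i' + 1 - a (1 - (k:ℤ) - (n:ℤ) - 1 - ((i'+1 : ℕ):ℤ)) ω) (by omega) r'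

lemma fev_F3 : (descendants a ω (1 - (k:ℤ) - (n:ℤ))).Finite := by
  apply Set.Finite.subset (Set.finite_singleton (1 - (k:ℤ) - (n:ℤ)))
  rintro d ⟨r, hr⟩
  simp only [Set.mem_singleton_iff]
  by_contra hne
  rcases lt_or_gt_of_ne hne with hlt | hgt
  · obtain ⟨i, hi⟩ : ∃ i : ℕ, d = 1 - (k:ℤ) - (n:ℤ) - 1 - (i:ℤ) :=
      ⟨(1 - (k:ℤ) - (n:ℤ) - 1 - d).toNat, by omega⟩
    rw [hi] at hr
    exact fev_key a ω hpos hn hk hω i r hr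
  · have hge := le_iterate a ω hpos r d
    rw [hr] at hge
    omega

end FEvent

section Meas

variable {Ω : Type*} [MeasurableSpace Ω] (P : Measure Ω) [IsProbabilityMeasure P]
  (a : ℤ → Ω → ℕ)

/-- The σ-algebra generated by the steps attached to sites in `t`. -/
abbrev sigmaOn (t : Set ℤ) : MeasurableSpace Ω :=
  ⨆ s ∈ t, MeasurableSpace.comap (a s) inferInstance

variable (hmeas : ∀ n, Measurable (a n))

include hmeas in
lemma sigmaOn_le (t : Set ℤ) : sigmaOn a t ≤ ‹MeasurableSpace Ω› :=
  iSup₂_le (fun s _ => (hmeas s).comap_le)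

lemma sigmaOn_mono {t t' : Set ℤ} (h : t ⊆ t') : sigmaOn a t ≤ sigmaOn a t' :=
  iSup₂_le (fun s hs => le_biSup (fun s => MeasurableSpace.comap (a s) inferInstance) (h hs))

lemma mset_single {t : Set ℤ} {s : ℤ} (hs : s ∈ t) (u : Set ℕ) :
    MeasurableSet[sigmaOn a t] (a s ⁻¹' u) := by
  have hle : MeasurableSpace.comap (a s) inferInstance ≤ sigmaOn a t :=
    le_biSup (fun s => MeasurableSpace.comap (a s) inferInstance) hs
  exact hle _ ⟨u, (Set.to_countable u).measurableSet, rfl⟩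

lemma measurable_V {t : Set ℤ} {site : ℕ → ℤ} (hsite : ∀ i, site i ∈ t) :
    Measurable[sigmaOn a t] (fun ω (i : ℕ) => a (site i) ω) :=
  @measurable_pi_lambda Ω ℕ (fun _ => ℕ) (sigmaOn a t) (fun _ => inferInstance) _
    (fun i => Measurable.of_comap_le
      (le_biSup (fun s => MeasurableSpace.comap (a s) inferInstance) (hsite i)))

variable (hindep : iIndepFun a P)

include hmeas hindep in
lemma indep_blocks (t : Set ℤ) {A B : Set Ω}
    (hA : MeasurableSet[sigmaOn a t] A) (hB : MeasurableSet[sigmaOn a tᶜ] B) :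
    P (A ∩ B) = P A * P B := by
  have h_le : ∀ s : ℤ, MeasurableSpace.comap (a s) inferInstance ≤ ‹MeasurableSpace Ω› :=
    fun s => (hmeas s).comap_le
  have h := indep_iSup_of_disjoint (S := t) (T := tᶜ) h_le hindep.iIndep disjoint_compl_right
  exact (Indep_iff _ _ _).1 h A B hA hB

include hmeas hindep in
/-- Finite product formula for events attached to distinct sites. -/
lemma prod_meas {ι : Type*} (idx : Finset ι) (site : ι → ℤ) (hinj : Set.InjOn site idx)
    (u : ι → Set ℕ) :
    P (⋂ j ∈ idx, a (site j) ⁻¹' u j) = ∏ j ∈ idx, P (a (site j) ⁻¹' u j) := by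
  classical
  induction idx using Finset.induction_on with
  | empty => simp
  | @insert j₀ s hj₀ ih =>
    rw [Finset.set_biInter_insert, Finset.prod_insert hj₀]
    have hmem : ∀ j ∈ s, site j ∈ ({site j₀} : Set ℤ)ᶜ := by
      intro j hj
      simp only [Set.mem_compl_iff, Set.mem_singleton_iff]
      intro he
      exact hj₀ (by
        have := hinj (Finset.mem_insert_of_mem hj) (Finset.mem_insert_self j₀ s) he
        rwa [this] at hj)
    have hB : MeasurableSet[sigmaOn a ({site j₀} : Set ℤ)ᶜ] (⋂ j ∈ s, a (site j) ⁻¹' u j) := by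
      refine MeasurableSet.biInter s.countable_toSet (fun j hj => ?_)
      exact mset_single a (hmem j hj) (u j)
    have hkey := indep_blocks P a hmeas hindep ({site j₀} : Set ℤ)
      (A := a (site j₀) ⁻¹' u j₀) (B := ⋂ j ∈ s, a (site j) ⁻¹' u j)
      (mset_single a (Set.mem_singleton _) (u j₀)) hB
    rw [hkey, ih (hinj.mono (by simp [Finset.subset_insert]))]

variable (hident : ∀ n, Measure.map (a n) P = Measure.map (a 0) P)

include hmeas hident in
lemma marg (s : ℤ) (u : Set ℕ) : P (a s ⁻¹' u) = P (a 0 ⁻¹' u) := by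
  have hu : MeasurableSet u := (Set.to_countable u).measurableSet
  rw [← Measure.map_apply (hmeas s) hu, hident s, Measure.map_apply (hmeas 0) hu]

include hmeas in
/-- Events determined by the walk from a fixed site are measurable w.r.t. the steps to its right
(inclusive). -/
lemma measEv (hpos : ∀ n ω, 1 ≤ a n ω) :
    ∀ (nn : ℕ) (x₀ r : ℤ),
      MeasurableSet[sigmaOn a {s : ℤ | x₀ ≤ s}] {ω | (genMap a ω)^[nn] x₀ = r} := by
  intro nn
  induction nn with
  | zero =>
    intro x₀ r
    have : {ω : Ω | (genMap a ω)^[0] x₀ = r} = a x₀ ⁻¹' (if x₀ = r then Set.univ else ∅) := by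
      rcases eq_or_ne x₀ r with h | h <;> ext ω <;> simp [h]
    rw [this]
    exact mset_single a (by simp) _
  | succ nn ih =>
    intro x₀ r
    have hdec : {ω : Ω | (genMap a ω)^[nn+1] x₀ = r} =
        ⋃ c : ℕ, ((a x₀ ⁻¹' {c+1}) ∩ {ω | (genMap a ω)^[nn] (x₀ + ((c:ℤ)+1)) = r}) := by
      ext ω
      simp only [Set.mem_iUnion, Set.mem_inter_iff, Set.mem_preimage, Set.mem_singleton_iff,
        Set.mem_setOf_eq]
      constructor
      · intro h
        refine ⟨a x₀ ω - 1, by have := hpos x₀ ω; omega, ?_⟩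
        rw [Function.iterate_succ_apply] at h
        have harg : genMap a ω x₀ = x₀ + ((((a x₀ ω - 1 : ℕ)):ℤ)+1) := by
          show x₀ + (a x₀ ω : ℤ) = _
          have := hpos x₀ ω
          push_cast
          omega
        rwa [harg] at h
      · rintro ⟨c, hc, h⟩
        rw [Function.iterate_succ_apply]
        have harg : genMap a ω x₀ = x₀ + ((c:ℤ)+1) := by
          show x₀ + (a x₀ ω : ℤ) = _
          rw [hc]; push_cast; ring
        rwa [harg]
    rw [hdec]
    refine MeasurableSet.iUnion fun c => MeasurableSet.inter ?_ ?_
    · exact mset_single a (by simp : x₀ ∈ {s : ℤ | x₀ ≤ s}) ({c+1})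
    · exact sigmaOn_mono a (by intro z hz; simp only [Set.mem_setOf_eq] at *; omega)
        _ (ih (x₀ + ((c:ℤ)+1)) r)

include hmeas in
lemma measEv' (hpos : ∀ n ω, 1 ≤ a n ω) (nn : ℕ) (x₀ r : ℤ) :
    MeasurableSet {ω | (genMap a ω)^[nn] x₀ = r} :=
  sigmaOn_le a hmeas _ _ (measEv a hmeas hpos nn x₀ r)

include hmeas hindep hident in
/-- The expected number of `nn`-fold ancestors of any site equals `1`. -/
lemma sum_one (hpos : ∀ n ω, 1 ≤ a n ω) :
    ∀ (nn : ℕ) (r : ℤ), (∑' m : ℤ, P {ω | (genMap a ω)^[nn] m = r}) = 1 := by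
  intro nn
  induction nn with
  | zero =>
    intro r
    have hterm : ∀ m : ℤ, P {ω | (genMap a ω)^[0] m = r} = if m = r then 1 else 0 := by
      intro m
      simp only [Function.iterate_zero, id_eq]
      rcases eq_or_ne m r with h | h
      · rw [if_pos h]
        have : {ω : Ω | m = r} = Set.univ := by ext ω; simp [h]
        rw [this, measure_univ]
      · rw [if_neg h]
        have : {ω : Ω | m = r} = ∅ := by ext ω; simp [h]
        rw [this, measure_empty]
    simp_rw [hterm]
    exact tsum_ite_eq r 1
  | succ nn ih =>
    intro r
    have hdec : ∀ m : ℤ, P {ω | (genMap a ω)^[nn+1] m = r} =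
        ∑' c : ℕ, P (a m ⁻¹' {c+1}) * P {ω | (genMap a ω)^[nn] (m + ((c:ℤ)+1)) = r} := by
      intro m
      have hsets : {ω : Ω | (genMap a ω)^[nn+1] m = r} =
          ⋃ c : ℕ, ((a m ⁻¹' {c+1}) ∩ {ω | (genMap a ω)^[nn] (m + ((c:ℤ)+1)) = r}) := by
        ext ω
        simp only [Set.mem_iUnion, Set.mem_inter_iff, Set.mem_preimage, Set.mem_singleton_iff,
          Set.mem_setOf_eq]
        constructor
        · intro h
          refine ⟨a m ω - 1, by have := hpos m ω; omega, ?_⟩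
          rw [Function.iterate_succ_apply] at h
          have harg : genMap a ω m = m + ((((a m ω - 1 : ℕ)):ℤ)+1) := by
            show m + (a m ω : ℤ) = _
            have := hpos m ω
            push_cast
            omega
          rwa [harg] at h
        · rintro ⟨c, hc, h⟩
          rw [Function.iterate_succ_apply]
          have harg : genMap a ω m = m + ((c:ℤ)+1) := by
            show m + (a m ω : ℤ) = _
            rw [hc]; push_cast; ring
          rwa [harg]
      rw [hsets, measure_iUnion]
      · congr 1
        funext c
        exact indep_blocks P a hmeas hindep ({m} : Set ℤ)
          (mset_single a (Set.mem_singleton _) _)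
          (sigmaOn_mono a (by
              intro z hz
              simp only [Set.mem_setOf_eq] at hz
              simp only [Set.mem_compl_iff, Set.mem_singleton_iff]
              omega) _
            (measEv a hmeas hpos nn (m + ((c:ℤ)+1)) r))
      · intro c c' hcc
        simp only [Function.onFun]
        refine Set.disjoint_left.2 fun ω h1 h2 => hcc ?_
        have e1 : a m ω = c + 1 := h1.1
        have e2 : a m ω = c' + 1 := h2.1
        omega
      · intro c
        exact ((hmeas m) ((Set.to_countable _).measurableSet)).inter
          (measEv' a hmeas hpos nn _ r)
    simp_rw [hdec]
    rw [ENNReal.tsum_comm]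
    have hinner : ∀ c : ℕ,
        (∑' m : ℤ, P (a m ⁻¹' {c+1}) * P {ω | (genMap a ω)^[nn] (m + ((c:ℤ)+1)) = r}) =
        P (a 0 ⁻¹' {c+1}) := by
      intro c
      have hmargc : ∀ m : ℤ, P (a m ⁻¹' {c+1}) = P (a 0 ⁻¹' {c+1}) := fun m =>
        marg P a hmeas hident m {c+1}
      simp_rw [hmargc]
      rw [ENNReal.tsum_mul_left]
      have hre : (∑' m : ℤ, P {ω | (genMap a ω)^[nn] (m + ((c:ℤ)+1)) = r}) = 1 := by
        calc (∑' m : ℤ, P {ω | (genMap a ω)^[nn] (m + ((c:ℤ)+1)) = r})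
            = ∑' z : ℤ, P {ω | (genMap a ω)^[nn] z = r} :=
              (Equiv.addRight ((c:ℤ)+1)).tsum_eq (fun z : ℤ => P {ω | (genMap a ω)^[nn] z = r})
          _ = 1 := ih r
      rw [hre, mul_one]
    simp_rw [hinner]
    have hfull : ⋃ c : ℕ, a 0 ⁻¹' {c+1} = Set.univ := by
      ext ω
      simp only [Set.mem_iUnion, Set.mem_preimage, Set.mem_singleton_iff, Set.mem_univ, iff_true]
      exact ⟨a 0 ω - 1, by have := hpos 0 ω; omega⟩
    rw [← measure_iUnion, hfull, measure_univ]
    · intro c c' hcc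
      simp only [Function.onFun]
      refine Set.disjoint_left.2 fun ω h1 h2 => hcc ?_
      simp only [Set.mem_preimage, Set.mem_singleton_iff] at h1 h2
      omega
    · exact fun c => (hmeas 0) ((Set.to_countable _).measurableSet)

/-- The step configuration to the left of site `m`, read right-to-left. -/
def Vmap (m : ℤ) : Ω → (ℕ → ℕ) := fun ω i => a (m - 1 - (i:ℤ)) ω

include hmeas in
lemma measurable_Vmap (m : ℤ) : Measurable (Vmap a m) :=
  measurable_pi_lambda _ (fun _ => hmeas _)

include hmeas hindep hident in
lemma key_cylinder (m' : ℤ) (s : Finset ℕ) (S : Set (∀ i : s, ℕ)) :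
    P ((fun ω => s.restrict (Vmap a m' ω)) ⁻¹' S)
      = ∑' y : S, ∏ i : s, P (a 0 ⁻¹' {(y : ∀ i : s, ℕ) i}) := by
  classical
  have hdecomp : (fun ω => s.restrict (Vmap a m' ω)) ⁻¹' S
      = ⋃ y : S, ⋂ i ∈ (Finset.univ : Finset ↥s),
          a (m' - 1 - ((i : ℕ):ℤ)) ⁻¹' {(y : ∀ i : s, ℕ) i} := by
    ext ω
    simp only [Set.mem_preimage, Set.mem_iUnion, Set.mem_iInter, Finset.mem_univ,
      Set.mem_singleton_iff, forall_true_left]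
    constructor
    · intro h
      exact ⟨⟨_, h⟩, fun i => rfl⟩
    · rintro ⟨y, hy⟩
      have : s.restrict (Vmap a m' ω) = (y : ∀ i : s, ℕ) := by
        funext i
        exact hy i
      rw [this]
      exact y.2
  rw [hdecomp, measure_iUnion]
  · congr 1
    funext y
    have := prod_meas P a hmeas hindep (Finset.univ : Finset ↥s)
      (fun i : ↥s => m' - 1 - ((i : ℕ):ℤ))
      (by intro i _ j _ h
          have h' : m' - 1 - ((i:ℕ):ℤ) = m' - 1 - ((j:ℕ):ℤ) := h
          exact Subtype.ext (by omega))
      (fun i : ↥s => {(y : ∀ i : s, ℕ) i})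
    rw [this]
    congr 1
    funext i
    exact marg P a hmeas hident _ _
  · intro y y' hyy
    simp only [Function.onFun]
    refine Set.disjoint_left.2 fun ω h1 h2 => hyy ?_
    simp only [Set.mem_iInter, Finset.mem_univ, Set.mem_preimage, Set.mem_singleton_iff,
      forall_true_left] at h1 h2
    apply Subtype.ext
    funext i
    rw [← h1 i, ← h2 i]
  · intro y
    exact MeasurableSet.biInter (Finset.univ : Finset ↥s).countable_toSet
      (fun i _ => (hmeas _) ((Set.to_countable _).measurableSet))

include hmeas hindep hident in
lemma map_Vmap_eq (m : ℤ) :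
    Measure.map (Vmap a m) P = Measure.map (Vmap a 0) P := by
  have hV : ∀ m' : ℤ, Measurable (Vmap a m') := fun m' => measurable_Vmap a hmeas m'
  have h1 : IsProbabilityMeasure (Measure.map (Vmap a m) P) :=
    Measure.isProbabilityMeasure_map (hV m).aemeasurable
  have h2 : IsProbabilityMeasure (Measure.map (Vmap a 0) P) :=
    Measure.isProbabilityMeasure_map (hV 0).aemeasurable
  refine ext_of_generate_finite (measurableCylinders (fun _ : ℕ => ℕ))
    generateFrom_measurableCylinders.symm isPiSystem_measurableCylinders ?_ ?_
  · intro t ht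
    obtain ⟨s, S, hS, rfl⟩ := (mem_measurableCylinders t).1 ht
    rw [Measure.map_apply (hV m) (MeasurableSet.cylinder s hS),
      Measure.map_apply (hV 0) (MeasurableSet.cylinder s hS)]
    have hm : (Vmap a m) ⁻¹' (cylinder s S) = (fun ω => s.restrict (Vmap a m ω)) ⁻¹' S := rfl
    have h0 : (Vmap a 0) ⁻¹' (cylinder s S) = (fun ω => s.restrict (Vmap a 0 ω)) ⁻¹' S := rfl
    rw [hm, h0, key_cylinder P a hmeas hindep hident m s S,
      key_cylinder P a hmeas hindep hident 0 s S]
  · rw [Measure.map_apply (hV m) MeasurableSet.univ,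
      Measure.map_apply (hV 0) MeasurableSet.univ]
    simp

include hmeas in
lemma desc_fin_set (hpos : ∀ n ω, 1 ≤ a n ω) (m : ℤ) :
    {ω | (descendants a ω m).Finite} = (Vmap a m) ⁻¹' (EInfᶜ) := by
  ext ω
  simp only [Set.mem_setOf_eq, Set.mem_preimage, Set.mem_compl_iff]
  rw [← Set.not_infinite]
  exact not_congr (desc_infinite_iff a ω hpos m)

include hmeas hindep hident in
lemma desc_fin_stationary (hpos : ∀ n ω, 1 ≤ a n ω) (m : ℤ) :
    P {ω | (descendants a ω m).Finite} = P {ω | (descendants a ω 0).Finite} := by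
  rw [desc_fin_set a hmeas hpos m, desc_fin_set a hmeas hpos 0,
    ← Measure.map_apply (measurable_Vmap a hmeas m) measurableSet_EInf.compl,
    ← Measure.map_apply (measurable_Vmap a hmeas 0) measurableSet_EInf.compl,
    map_Vmap_eq P a hmeas hindep hident m]

lemma tsum_ite_lt (N : ℕ) : (∑' i : ℕ, if i < N then (1:ℝ≥0∞) else 0) = N := by
  rw [tsum_eq_sum (s := Finset.range N) (fun i hi => if_neg (by simpa using hi))]
  rw [Finset.sum_congr rfl (fun i hi => if_pos (Finset.mem_range.1 hi))]
  simp

include hmeas in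
lemma tail_eq : (∑' i : ℕ, P {ω | i < a 0 ω}) = ∫⁻ ω, (a 0 ω : ℝ≥0∞) ∂P := by
  have hms : ∀ i : ℕ, MeasurableSet {ω : Ω | i < a 0 ω} :=
    fun i => (hmeas 0) ((Set.to_countable {x : ℕ | i < x}).measurableSet)
  calc (∑' i : ℕ, P {ω | i < a 0 ω})
      = ∑' i : ℕ, ∫⁻ ω, (if i < a 0 ω then (1:ℝ≥0∞) else 0) ∂P := by
        congr 1
        funext i
        have : (fun ω => if i < a 0 ω then (1:ℝ≥0∞) else 0)
            = Set.indicator {ω : Ω | i < a 0 ω} (fun _ => (1:ℝ≥0∞)) := by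
          funext ω
          rw [Set.indicator_apply]
          simp only [Set.mem_setOf_eq]
        rw [this, lintegral_indicator (hms i), setLIntegral_one]
    _ = ∫⁻ ω, (∑' i : ℕ, if i < a 0 ω then (1:ℝ≥0∞) else 0) ∂P := by
        rw [lintegral_tsum]
        intro i
        exact (Measurable.ite (hms i) measurable_const measurable_const).aemeasurable
    _ = ∫⁻ ω, (a 0 ω : ℝ≥0∞) ∂P := by
        apply lintegral_congr
        intro ω
        exact tsum_ite_lt (a 0 ω)

include hmeas in
lemma exists_k (hpos : ∀ n ω, 1 ≤ a n ω) (h1' : P {ω | a 0 ω = 1} < 1) :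
    ∃ k : ℕ, 2 ≤ k ∧ 0 < P (a 0 ⁻¹' {k}) := by
  by_contra hno
  push_neg at hno
  have hz : P {ω : Ω | 2 ≤ a 0 ω} = 0 := by
    have hU : {ω : Ω | 2 ≤ a 0 ω} = ⋃ c : ℕ, a 0 ⁻¹' {c+2} := by
      ext ω
      simp only [Set.mem_setOf_eq, Set.mem_iUnion, Set.mem_preimage, Set.mem_singleton_iff]
      constructor
      · intro h; exact ⟨a 0 ω - 2, by omega⟩
      · rintro ⟨c, hc⟩; omega
    rw [hU]
    exact measure_iUnion_null fun c => le_zero_iff.mp (hno (c+2) (by omega))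
  have huniv : {ω : Ω | a 0 ω = 1} ∪ {ω : Ω | 2 ≤ a 0 ω} = Set.univ := by
    ext ω
    have := hpos 0 ω
    simp only [Set.mem_union, Set.mem_setOf_eq, Set.mem_univ, iff_true]
    omega
  have hone : (1:ℝ≥0∞) ≤ P {ω : Ω | a 0 ω = 1} := by
    have h := measure_union_le (μ := P) {ω : Ω | a 0 ω = 1} {ω : Ω | 2 ≤ a 0 ω}
    rw [huniv, measure_univ, hz, add_zero] at h
    exact h
  exact absurd h1' (not_lt.mpr hone)

include hmeas hindep hident in
lemma PF_pos (hpos : ∀ n ω, 1 ≤ a n ω) (hmean : ∫⁻ ω, (a 0 ω : ℝ≥0∞) ∂P < ⊤)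
    (h1 : 0 < P {ω | a 0 ω = 1}) {n k : ℕ} (hn : 1 ≤ n) (hk : 2 ≤ k)
    (hkpos : 0 < P (a 0 ⁻¹' {k})) :
    0 < P (⋂ j : ℕ, a (fsite n k j) ⁻¹' ftset n k j) := by
  have h1pre : 0 < P (a 0 ⁻¹' {1}) := by
    have : a 0 ⁻¹' {1} = {ω : Ω | a 0 ω = 1} := by
      ext ω; simp
    rw [this]; exact h1
  have htail_fin : (∑' i : ℕ, P {ω : Ω | i < a 0 ω}) ≠ ⊤ := by
    rw [tail_eq P a hmeas]; exact hmean.ne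
  obtain ⟨J, hJ⟩ : ∃ J : ℕ, (∑' i : ℕ, P {ω : Ω | (i + J : ℕ) < a 0 ω}) < 1/2 := by
    have ht := ENNReal.tendsto_sum_nat_add (fun i => P {ω : Ω | i < a 0 ω}) htail_fin
    have hhalf : (0:ℝ≥0∞) < 1/2 := by norm_num
    exact (ht.eventually_lt_const hhalf).exists
  set J' := n + 2 + J with hJ'def
  have hsplit : (⋂ j : ℕ, a (fsite n k j) ⁻¹' ftset n k j)
      = (⋂ j ∈ Finset.range J', a (fsite n k j) ⁻¹' ftset n k j)
        ∩ (⋂ i : ℕ, a (fsite n k (J' + i)) ⁻¹' ftset n k (J' + i)) := by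
    ext ω
    simp only [Set.mem_iInter, Set.mem_inter_iff, Finset.mem_range]
    constructor
    · intro h; exact ⟨fun j _ => h j, fun i => h _⟩
    · rintro ⟨ha, hb⟩ j
      rcases lt_or_ge j J' with hj | hj
      · exact ha j hj
      · have := hb (j - J')
        rwa [show J' + (j - J') = j from by omega] at this
  rw [hsplit]
  have hhead_meas : MeasurableSet[sigmaOn a (fsite n k '' {j : ℕ | j < J'})]
      (⋂ j ∈ Finset.range J', a (fsite n k j) ⁻¹' ftset n k j) := by
    refine MeasurableSet.biInter (Finset.range J').countable_toSet (fun j hj => ?_)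
    exact mset_single a (Set.mem_image_of_mem _ (show j ∈ {j : ℕ | j < J'} from Finset.mem_range.1 hj)) _
  have htail_meas : MeasurableSet[sigmaOn a (fsite n k '' {j : ℕ | j < J'})ᶜ]
      (⋂ i : ℕ, a (fsite n k (J' + i)) ⁻¹' ftset n k (J' + i)) := by
    refine MeasurableSet.iInter (fun i => ?_)
    refine mset_single a ?_ _
    rintro ⟨j, hj, he⟩
    have := fsite_inj hk he
    simp only [Set.mem_setOf_eq] at hj
    omega
  rw [indep_blocks P a hmeas hindep _ hhead_meas htail_meas]
  apply ENNReal.mul_pos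
  · -- head factor is positive
    rw [prod_meas P a hmeas hindep (Finset.range J') (fsite n k) ((fsite_inj hk).injOn) _]
    refine (CanonicallyOrderedAdd.prod_pos.mpr fun j _ => ?_).ne'
    rw [marg P a hmeas hident]
    unfold ftset
    split_ifs with hc1 hc2
    · exact h1pre
    · exact hkpos
    · refine lt_of_lt_of_le h1pre (measure_mono ?_)
      intro x hx
      simp only [Set.mem_preimage, Set.mem_singleton_iff] at hx
      simp only [Set.mem_preimage, Set.mem_setOf_eq, hx]
      omega
  · -- tail factor is at least 1/2
    set T := ⋂ i : ℕ, a (fsite n k (J' + i)) ⁻¹' ftset n k (J' + i) with hTdef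
    have hTmeas : MeasurableSet T :=
      MeasurableSet.iInter fun i =>
        (hmeas _) ((Set.to_countable _).measurableSet)
    have hTc : P Tᶜ < 1/2 := by
      have hTc1 : P Tᶜ ≤ ∑' i : ℕ, P ((a (fsite n k (J' + i)) ⁻¹' ftset n k (J' + i))ᶜ) := by
        rw [hTdef, Set.compl_iInter]
        exact measure_iUnion_le _
      refine lt_of_le_of_lt (le_trans hTc1 ?_) hJ
      refine ENNReal.tsum_le_tsum fun i => ?_
      rw [← Set.preimage_compl, marg P a hmeas hident]
      refine measure_mono ?_
      intro ω hω
      simp only [Set.mem_preimage, Set.mem_compl_iff, ftset, Set.mem_setOf_eq] at hω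
      rw [if_neg (by omega : ¬ J' + i < n), if_neg (by omega : ¬ J' + i < n + 2)] at hω
      simp only [Set.mem_setOf_eq] at hω ⊢
      omega
    by_contra h0
    have hT0 : P T = 0 := h0
    have := prob_compl_eq_one_sub (μ := P) hTmeas
    rw [hT0, tsub_zero] at this
    rw [this] at hTc
    exact absurd hTc (by norm_num)

end Meas

end SuccAux

open SuccAux

/-- Assume `ℙ[a₀ = 1] ∈ (0,1)` and `E[a₀] < ∞`. Then for every
`n ≥ 1`, `E[d_n(0) | 0 successful] > 1` and `E[d_n(0) | 0 ephemeral] < 1`, where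
`d_n(0) = #{m ∈ ℤ : f^n(m) = 0}` (expressed as the `ℝ≥0∞`-valued sum of indicators),
`0` is successful if it has infinitely many descendants and ephemeral otherwise. -/
theorem conditional_mean_offspring_supercritical_subcritical
    {Ω : Type*} [MeasurableSpace Ω] (P : Measure Ω) [IsProbabilityMeasure P]
    (a : ℤ → Ω → ℕ) (hmeas : ∀ n, Measurable (a n)) (hpos : ∀ n ω, 1 ≤ a n ω)
    (hindep : iIndepFun a P)
    (hident : ∀ n, Measure.map (a n) P = Measure.map (a 0) P)
    (hmean : ∫⁻ ω, (a 0 ω : ℝ≥0∞) ∂P < ⊤)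
    (h1 : 0 < P {ω | a 0 ω = 1}) (h1' : P {ω | a 0 ω = 1} < 1) :
    ∀ n : ℕ, 1 ≤ n →
      1 < ∫⁻ ω, (∑' m : ℤ, if (genMap a ω)^[n] m = 0 then (1 : ℝ≥0∞) else 0)
            ∂(P[|{ω | (descendants a ω 0).Infinite}]) ∧
      ∫⁻ ω, (∑' m : ℤ, if (genMap a ω)^[n] m = 0 then (1 : ℝ≥0∞) else 0)
            ∂(P[|{ω | (descendants a ω 0).Finite}]) < 1 := by
  intro n hn
  classical
  obtain ⟨k, hk, hkpos⟩ := exists_k P a hmeas hpos h1'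
  set S : Set Ω := {ω | (descendants a ω 0).Infinite} with hSdef
  have hSc : {ω : Ω | (descendants a ω 0).Finite} = Sᶜ := by
    ext ω
    simp only [hSdef, Set.mem_setOf_eq, Set.mem_compl_iff]
    exact Set.not_infinite.symm
  have hScomp : Sᶜ = (Vmap a 0) ⁻¹' (EInfᶜ) := by
    rw [← hSc]
    exact desc_fin_set a hmeas hpos 0
  have hSmeas : MeasurableSet S := by
    have h2 : MeasurableSet Sᶜ := by
      rw [hScomp]
      exact (measurable_Vmap a hmeas 0) measurableSet_EInf.compl
    simpa using h2.compl
  have hEv : ∀ m : ℤ, MeasurableSet {ω : Ω | (genMap a ω)^[n] m = 0} :=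
    fun m => measEv' a hmeas hpos n m 0
  have hint : ∀ (W : Set Ω), MeasurableSet W →
      (∫⁻ ω, (∑' m : ℤ, if (genMap a ω)^[n] m = 0 then (1:ℝ≥0∞) else 0) ∂(P.restrict W))
        = ∑' m : ℤ, P ({ω : Ω | (genMap a ω)^[n] m = 0} ∩ W) := by
    intro W hW
    rw [lintegral_tsum (fun m =>
      (Measurable.ite (hEv m) measurable_const measurable_const).aemeasurable)]
    congr 1
    funext m
    have hind : (fun ω => if (genMap a ω)^[n] m = 0 then (1:ℝ≥0∞) else 0)
        = Set.indicator {ω : Ω | (genMap a ω)^[n] m = 0} (fun _ => (1:ℝ≥0∞)) := by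
      funext ω
      rw [Set.indicator_apply]
      simp only [Set.mem_setOf_eq]
    rw [hind, lintegral_indicator (hEv m), setLIntegral_one, Measure.restrict_apply (hEv m)]
  have hsum1 : (∑' m : ℤ, P {ω : Ω | (genMap a ω)^[n] m = 0}) = 1 :=
    sum_one P a hmeas hindep hident hpos n 0
  set F : Set Ω := ⋂ j : ℕ, a (fsite n k j) ⁻¹' ftset n k j with hFdef
  have hFmeas : MeasurableSet F :=
    MeasurableSet.iInter fun j => (hmeas _) ((Set.to_countable _).measurableSet)
  have hFpos : 0 < P F := PF_pos P a hmeas hindep hident hpos hmean h1 hn hk hkpos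
  have hFprop : ∀ ω ∈ F, (∀ j, a (fsite n k j) ω ∈ ftset n k j) :=
    fun ω hω j => Set.mem_iInter.1 hω j
  have hFsubEv : F ⊆ {ω : Ω | (genMap a ω)^[n] (1 - (k:ℤ) - (n:ℤ)) = 0} :=
    fun ω hω => fev_F1 a ω hpos hn hk (hFprop ω hω)
  have hFsubS : F ⊆ S :=
    fun ω hω => fev_F2 a ω hpos hn hk (hFprop ω hω)
  have hFsubFin : F ⊆ {ω : Ω | (descendants a ω (1 - (k:ℤ) - (n:ℤ))).Finite} :=
    fun ω hω => fev_F3 a ω hpos hn hk (hFprop ω hω)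
  set q' : ℝ≥0∞ := P Sᶜ with hq'def
  have hstat : ∀ m : ℤ, P {ω : Ω | (descendants a ω m).Finite} = q' := by
    intro m
    rw [desc_fin_stationary P a hmeas hindep hident hpos m, hq'def, ← hSc]
  have hindepm : ∀ m : ℤ,
      P ({ω : Ω | (genMap a ω)^[n] m = 0} ∩ {ω : Ω | (descendants a ω m).Finite})
        = P {ω : Ω | (genMap a ω)^[n] m = 0} * q' := by
    intro m
    rw [Set.inter_comm]
    have hA : MeasurableSet[sigmaOn a {s : ℤ | s < m}] {ω : Ω | (descendants a ω m).Finite} := by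
      rw [desc_fin_set a hmeas hpos m]
      exact (measurable_V a (t := {s : ℤ | s < m}) (site := fun i : ℕ => m - 1 - (i:ℤ))
        (fun i => by simp only [Set.mem_setOf_eq]; omega)) measurableSet_EInf.compl
    have hB : MeasurableSet[sigmaOn a ({s : ℤ | s < m})ᶜ] {ω : Ω | (genMap a ω)^[n] m = 0} := by
      refine sigmaOn_mono a ?_ _ (measEv a hmeas hpos n m 0)
      intro z hz
      simp only [Set.mem_setOf_eq, Set.mem_compl_iff] at *
      omega
    rw [indep_blocks P a hmeas hindep {s : ℤ | s < m} hA hB, hstat m, mul_comm]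
  have hper : ∀ m : ℤ,
      P ({ω : Ω | (genMap a ω)^[n] m = 0} ∩ Sᶜ)
        + (if m = 1 - (k:ℤ) - (n:ℤ) then P F else 0)
      ≤ P {ω : Ω | (genMap a ω)^[n] m = 0} * q' := by
    intro m
    rw [← hindepm m]
    have hsub : {ω : Ω | (genMap a ω)^[n] m = 0} ∩ Sᶜ
        ⊆ {ω : Ω | (genMap a ω)^[n] m = 0} ∩ {ω : Ω | (descendants a ω m).Finite} := by
      rintro ω ⟨h1m, h2m⟩
      refine ⟨h1m, ?_⟩
      have hDsub : descendants a ω m ⊆ descendants a ω 0 := by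
        rintro d ⟨r, hr⟩
        exact ⟨n + r, by rw [Function.iterate_add_apply, hr]; exact h1m⟩
      have hfin0 : (descendants a ω 0).Finite := Set.not_infinite.mp h2m
      exact hfin0.subset hDsub
    rcases eq_or_ne m (1 - (k:ℤ) - (n:ℤ)) with rfl | hne
    · rw [if_pos rfl]
      have hdisj : Disjoint ({ω : Ω | (genMap a ω)^[n] (1 - (k:ℤ) - (n:ℤ)) = 0} ∩ Sᶜ) F :=
        Set.disjoint_left.2 fun ω hω hF => hω.2 (hFsubS hF)
      calc P ({ω : Ω | (genMap a ω)^[n] (1 - (k:ℤ) - (n:ℤ)) = 0} ∩ Sᶜ) + P F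
          = P (({ω : Ω | (genMap a ω)^[n] (1 - (k:ℤ) - (n:ℤ)) = 0} ∩ Sᶜ) ∪ F) :=
            (measure_union hdisj hFmeas).symm
        _ ≤ P ({ω : Ω | (genMap a ω)^[n] (1 - (k:ℤ) - (n:ℤ)) = 0}
              ∩ {ω : Ω | (descendants a ω (1 - (k:ℤ) - (n:ℤ))).Finite}) :=
            measure_mono (Set.union_subset hsub (fun ω hF => ⟨hFsubEv hF, hFsubFin hF⟩))
    · rw [if_neg hne, add_zero]
      exact measure_mono hsub
  have hkey : (∑' m : ℤ, P ({ω : Ω | (genMap a ω)^[n] m = 0} ∩ Sᶜ)) + P F ≤ q' := by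
    have hL : (∑' m : ℤ, (P ({ω : Ω | (genMap a ω)^[n] m = 0} ∩ Sᶜ)
          + (if m = 1 - (k:ℤ) - (n:ℤ) then P F else 0)))
        = (∑' m : ℤ, P ({ω : Ω | (genMap a ω)^[n] m = 0} ∩ Sᶜ)) + P F := by
      rw [ENNReal.tsum_add]
      congr 1
      exact tsum_ite_eq (1 - (k:ℤ) - (n:ℤ)) (fun _ => P F)
    calc (∑' m : ℤ, P ({ω : Ω | (genMap a ω)^[n] m = 0} ∩ Sᶜ)) + P F
        = ∑' m : ℤ, (P ({ω : Ω | (genMap a ω)^[n] m = 0} ∩ Sᶜ)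
            + (if m = 1 - (k:ℤ) - (n:ℤ) then P F else 0)) := hL.symm
      _ ≤ ∑' m : ℤ, P {ω : Ω | (genMap a ω)^[n] m = 0} * q' := ENNReal.tsum_le_tsum hper
      _ = q' := by rw [ENNReal.tsum_mul_right, hsum1, one_mul]
  set A' : ℝ≥0∞ := ∑' m : ℤ, P ({ω : Ω | (genMap a ω)^[n] m = 0} ∩ Sᶜ) with hA'def
  set A : ℝ≥0∞ := ∑' m : ℤ, P ({ω : Ω | (genMap a ω)^[n] m = 0} ∩ S) with hAdef
  have htot : A + A' = 1 := by
    have hm : ∀ m : ℤ, P ({ω : Ω | (genMap a ω)^[n] m = 0} ∩ S)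
        + P ({ω : Ω | (genMap a ω)^[n] m = 0} ∩ Sᶜ) = P {ω : Ω | (genMap a ω)^[n] m = 0} := by
      intro m
      have := measure_inter_add_diff (μ := P) {ω : Ω | (genMap a ω)^[n] m = 0} hSmeas
      rwa [Set.diff_eq] at this
    calc A + A' = ∑' m : ℤ, (P ({ω : Ω | (genMap a ω)^[n] m = 0} ∩ S)
          + P ({ω : Ω | (genMap a ω)^[n] m = 0} ∩ Sᶜ)) := (ENNReal.tsum_add).symm
      _ = ∑' m : ℤ, P {ω : Ω | (genMap a ω)^[n] m = 0} := by
          congr 1; funext m; exact hm m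
      _ = 1 := hsum1
  have hq'top : q' ≠ ⊤ := measure_ne_top P _
  have hqq' : P S + q' = 1 := prob_add_prob_compl hSmeas
  have hA'le : A' ≤ 1 := htot ▸ le_add_self
  have hA'top : A' ≠ ⊤ := (lt_of_le_of_lt hA'le ENNReal.one_lt_top).ne
  have hA'q' : A' < q' :=
    lt_of_lt_of_le (ENNReal.lt_add_right hA'top hFpos.ne') hkey
  have hqA : P S + P F ≤ A := by
    have h2 : (P S + P F) + A' ≤ A + A' := by
      calc (P S + P F) + A' = P S + (A' + P F) := by ring
        _ ≤ P S + q' := add_le_add_right hkey _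
        _ = 1 := hqq'
        _ = A + A' := htot.symm
    exact ENNReal.le_of_add_le_add_right hA'top h2
  have hSpos : 0 < P S := lt_of_lt_of_le hFpos (measure_mono hFsubS)
  have hSA : P S < A :=
    lt_of_lt_of_le (ENNReal.lt_add_right (measure_ne_top P S) hFpos.ne') hqA
  have hq'pos : 0 < q' :=
    lt_of_lt_of_le hFpos (le_trans le_add_self hkey)
  constructor
  · show 1 < ∫⁻ ω, (∑' m : ℤ, if (genMap a ω)^[n] m = 0 then (1:ℝ≥0∞) else 0) ∂(P[|S])
    rw [ProbabilityTheory.cond, lintegral_smul_measure, hint S hSmeas]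
    calc (1:ℝ≥0∞) = (P S)⁻¹ * P S :=
          (ENNReal.inv_mul_cancel hSpos.ne' (measure_ne_top P S)).symm
      _ < (P S)⁻¹ * A := by
          refine (ENNReal.mul_lt_mul_iff_right ?_ ?_).mpr hSA
          · simp [ENNReal.inv_ne_zero, measure_ne_top P S]
          · simp [ENNReal.inv_ne_top, hSpos.ne']
  · show (∫⁻ ω, (∑' m : ℤ, if (genMap a ω)^[n] m = 0 then (1:ℝ≥0∞) else 0)
        ∂(P[|{ω : Ω | (descendants a ω 0).Finite}])) < 1
    rw [hSc, ProbabilityTheory.cond, lintegral_smul_measure, hint Sᶜ hSmeas.compl]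
    calc (P Sᶜ)⁻¹ * A' < (P Sᶜ)⁻¹ * q' := by
          refine (ENNReal.mul_lt_mul_iff_right ?_ ?_).mpr hA'q'
          · simp [ENNReal.inv_ne_zero, hq'top]
          · exact ENNReal.inv_ne_top.2 hq'pos.ne'
      _ = 1 := ENNReal.inv_mul_cancel hq'pos.ne' hq'top
end
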